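/- arXiv:1309.7499 — 7 statements merged into one kernel-verified Lean document; each statement's English description precedes it below -/
import Mathlib

section
/- Let n ≥ 3 and 0 < α < 2, and let B > 0 be a constant. For s, t > 0 define I(s,t) = (s+t)^{-(n-2)/2} ∫₀^{s/t} (s - t b)^{(n-2)/2} / (b^{α/2} (1+b)) db and H(s,t) = s^{-(n-α)/2} (1 - B·I(s,t)). Then ∂I/∂s (s,t) = (n-2)t / (2(s+t)^{n/2}) · ∫₀^{s/t} (s - t b)^{(n-4)/2} b^{-α/2} db > 0. -/
open Set intervalIntegral

section auxStmt2

open MeasureTheory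

private lemma ae_ne_one' : ∀ᵐ (v : ℝ), v ≠ 1 := by
  have : MeasureTheory.volume ({(1:ℝ)} : Set ℝ) = 0 := Real.volume_singleton
  filter_upwards [MeasureTheory.compl_mem_ae_iff.mpr this] with v hv
  simpa using hv

private lemma betaHalf' {e1 e2 : ℝ} (h2 : -1 < e2) :
    IntervalIntegrable (fun v => (1-v) ^ e1 * v ^ e2) volume 0 (1/2) := by
  have hbase : IntervalIntegrable (fun v : ℝ => v ^ e2) volume 0 (1/2) :=
    intervalIntegrable_rpow' h2
  set C : ℝ := max 1 ((1/2 : ℝ) ^ e1) with hC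
  have hC0 : 0 ≤ C := le_trans zero_le_one (le_max_left _ _)
  apply ((hbase.const_mul C)).mono_fun
  · apply Measurable.aestronglyMeasurable; fun_prop
  · filter_upwards [MeasureTheory.ae_restrict_mem measurableSet_uIoc] with v hv
    rw [Set.uIoc_of_le (by norm_num : (0:ℝ) ≤ 1/2)] at hv
    obtain ⟨hv0, hv1⟩ := hv
    have h1v : (0:ℝ) < 1 - v := by linarith
    have hb : (1-v) ^ e1 ≤ C := by
      rcases le_or_gt 0 e1 with he | he
      · exact le_trans (Real.rpow_le_one (by linarith) (by linarith) he) (le_max_left _ _)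
      · exact le_trans (Real.rpow_le_rpow_of_nonpos (by norm_num) (by linarith) he.le)
          (le_max_right _ _)
    have hn1 : 0 ≤ (1-v) ^ e1 := Real.rpow_nonneg h1v.le _
    have hn2 : 0 ≤ v ^ e2 := Real.rpow_nonneg hv0.le _
    simp only [Real.norm_eq_abs, abs_of_nonneg (mul_nonneg hn1 hn2),
      abs_of_nonneg (mul_nonneg hC0 hn2)]
    exact mul_le_mul_of_nonneg_right hb hn2

private lemma betaInt' {e1 e2 : ℝ} (h1 : -1 < e1) (h2 : -1 < e2) :
    IntervalIntegrable (fun v => (1-v) ^ e1 * v ^ e2) volume 0 1 := by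
  apply IntervalIntegrable.trans (b := (1/2 : ℝ)) (betaHalf' h2)
  have := ((betaHalf' (e1 := e2) (e2 := e1) h1).comp_sub_left 1).symm
  norm_num at this
  simpa [mul_comm] using this

private lemma betaIntMul' {e1 e2 : ℝ} (h1 : -1 < e1) (h2 : -1 < e2) {h : ℝ → ℝ}
    (hm : Measurable h) (hb : ∀ v ∈ Set.Ioc (0:ℝ) 1, |h v| ≤ 1) :
    IntervalIntegrable (fun v => (1-v) ^ e1 * v ^ e2 * h v) volume 0 1 := by
  apply (betaInt' h1 h2).mono_fun
  · apply Measurable.aestronglyMeasurable; fun_prop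
  · filter_upwards [MeasureTheory.ae_restrict_mem measurableSet_uIoc] with v hv
    rw [Set.uIoc_of_le (by norm_num : (0:ℝ) ≤ 1)] at hv
    have hn1 : 0 ≤ (1-v) ^ e1 := Real.rpow_nonneg (by linarith [hv.2]) _
    have hn2 : 0 ≤ v ^ e2 := Real.rpow_nonneg hv.1.le _
    have hp : 0 ≤ (1-v) ^ e1 * v ^ e2 := mul_nonneg hn1 hn2
    simp only [Real.norm_eq_abs, abs_mul, abs_of_nonneg hn1, abs_of_nonneg hn2]
    calc (1-v) ^ e1 * v ^ e2 * |h v| ≤ (1-v) ^ e1 * v ^ e2 * 1 :=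
        mul_le_mul_of_nonneg_left (hb v hv) hp
    _ = (1-v) ^ e1 * v ^ e2 := by ring

private lemma substA' (x t p a : ℝ) (hx : 0 < x) (ht : 0 < t) :
    (∫ b in (0:ℝ)..(x/t), (x - t*b) ^ p / (b ^ a * (1+b)))
      = t ^ (a-1) * x ^ (p+1-a) *
        ∫ v in (0:ℝ)..1, (1-v) ^ p * v ^ (-a) * (1 + x*(v/t))⁻¹ := by
  set c := x / t with hc
  have hc0 : 0 < c := div_pos hx ht
  have comp := intervalIntegral.smul_integral_comp_mul_left
    (fun b => (x - t*b) ^ p / (b ^ a * (1+b))) c (a := 0) (b := 1)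
  simp only [mul_zero, mul_one, smul_eq_mul] at comp
  rw [← comp]
  have key : ∀ᵐ v : ℝ, v ∈ Set.uIoc (0:ℝ) 1 →
      (x - t*(c*v)) ^ p / ((c*v) ^ a * (1+c*v))
        = (x ^ p * c ^ (-a)) * ((1-v) ^ p * v ^ (-a) * (1 + x*(v/t))⁻¹) := by
    filter_upwards [ae_ne_one'] with v hv1 hv
    rw [Set.uIoc_of_le (by norm_num : (0:ℝ) ≤ 1)] at hv
    have hv0 : 0 < v := hv.1
    have hvlt : v < 1 := lt_of_le_of_ne hv.2 hv1
    have e1 : x - t*(c*v) = x*(1-v) := by rw [hc]; field_simp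
    have e2 : 1 + c*v = 1 + x*(v/t) := by rw [hc]; ring
    rw [e1, e2, Real.mul_rpow hx.le (by linarith), Real.mul_rpow hc0.le hv0.le,
      Real.rpow_neg hc0.le, Real.rpow_neg hv0.le]
    have hca : (0:ℝ) < c ^ a := Real.rpow_pos_of_pos hc0 a
    have hva : (0:ℝ) < v ^ a := Real.rpow_pos_of_pos hv0 a
    have hden : (0:ℝ) < 1 + x*(v/t) := by positivity
    field_simp
  rw [intervalIntegral.integral_congr_ae key, intervalIntegral.integral_const_mul]
  have e3 : c * (x ^ p * c ^ (-a) * ∫ v in (0:ℝ)..1, (1-v) ^ p * v ^ (-a) * (1 + x*(v/t))⁻¹)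
      = (c ^ (1-a) * x ^ p) * ∫ v in (0:ℝ)..1, (1-v) ^ p * v ^ (-a) * (1 + x*(v/t))⁻¹ := by
    rw [show (1:ℝ)-a = 1 + (-a) by ring, Real.rpow_add hc0, Real.rpow_one]
    ring
  rw [e3]
  congr 1
  rw [hc, Real.div_rpow hx.le ht.le, show a-1 = -(1-a) by ring, Real.rpow_neg ht.le,
    show p+1-a = p + (1-a) by ring, Real.rpow_add hx]
  ring

private lemma substB' (x t r a : ℝ) (hx : 0 < x) (ht : 0 < t) :
    (∫ b in (0:ℝ)..(x/t), (x - t*b) ^ r * b ^ (-a))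
      = t ^ (a-1) * x ^ (r+1-a) * ∫ v in (0:ℝ)..1, (1-v) ^ r * v ^ (-a) := by
  set c := x / t with hc
  have hc0 : 0 < c := div_pos hx ht
  have comp := intervalIntegral.smul_integral_comp_mul_left
    (fun b => (x - t*b) ^ r * b ^ (-a)) c (a := 0) (b := 1)
  simp only [mul_zero, mul_one, smul_eq_mul] at comp
  rw [← comp]
  have key : ∀ᵐ v : ℝ, v ∈ Set.uIoc (0:ℝ) 1 →
      (x - t*(c*v)) ^ r * (c*v) ^ (-a)
        = (x ^ r * c ^ (-a)) * ((1-v) ^ r * v ^ (-a)) := by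
    filter_upwards [ae_ne_one'] with v hv1 hv
    rw [Set.uIoc_of_le (by norm_num : (0:ℝ) ≤ 1)] at hv
    have hv0 : 0 < v := hv.1
    have hvlt : v < 1 := lt_of_le_of_ne hv.2 hv1
    have e1 : x - t*(c*v) = x*(1-v) := by rw [hc]; field_simp
    rw [e1, Real.mul_rpow hx.le (by linarith), Real.mul_rpow hc0.le hv0.le]
    ring
  rw [intervalIntegral.integral_congr_ae key, intervalIntegral.integral_const_mul]
  have e3 : c * (x ^ r * c ^ (-a) * ∫ v in (0:ℝ)..1, (1-v) ^ r * v ^ (-a))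
      = (c ^ (1-a) * x ^ r) * ∫ v in (0:ℝ)..1, (1-v) ^ r * v ^ (-a) := by
    rw [show (1:ℝ)-a = 1 + (-a) by ring, Real.rpow_add hc0, Real.rpow_one]
    ring
  rw [e3]
  congr 1
  rw [hc, Real.div_rpow hx.le ht.le, show a-1 = -(1-a) by ring, Real.rpow_neg ht.le,
    show r+1-a = r + (1-a) by ring, Real.rpow_add hx]
  ring

private lemma Kderiv' (p a s t : ℝ) (hp : 0 < p) (ha0 : 0 < a) (ha1 : a < 1)
    (hs : 0 < s) (ht : 0 < t) :
    HasDerivAt (fun x => ∫ v in (0:ℝ)..1, (1-v) ^ p * v ^ (-a) * (1 + x*(v/t))⁻¹)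
      (-(1/t) * ∫ v in (0:ℝ)..1, (1-v) ^ p * v ^ (1-a) * (((1 + s*(v/t))^2)⁻¹)) s := by
  set F : ℝ → ℝ → ℝ := fun x v => (1-v) ^ p * v ^ (-a) * (1 + x*(v/t))⁻¹ with hF
  set F' : ℝ → ℝ → ℝ := fun x v => (1-v) ^ p * v ^ (-a) * (-(v/t) / (1 + x*(v/t))^2) with hF'
  have huIoc : Set.uIoc (0:ℝ) 1 = Set.Ioc 0 1 := Set.uIoc_of_le (by norm_num)
  have hmain := intervalIntegral.hasDerivAt_integral_of_dominated_loc_of_deriv_le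
    (F := F) (F' := F') (x₀ := s) (a := 0) (b := 1) (μ := volume)
    (bound := fun v => v ^ (-a) / t) (Metric.ball_mem_nhds s hs)
    (by filter_upwards with x; apply Measurable.aestronglyMeasurable; fun_prop)
    (betaIntMul' (h := fun v => (1 + s*(v/t))⁻¹) (by linarith) (by linarith) (by fun_prop)
      (by intro v hv
          have hv0 := hv.1
          have hq : (0:ℝ) ≤ s*(v/t) := by positivity
          have hd : (0:ℝ) < 1 + s*(v/t) := by linarith
          rw [abs_of_pos (inv_pos.mpr hd), inv_le_one_iff₀]
          right; linarith))
    (by apply Measurable.aestronglyMeasurable; fun_prop)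
    (by filter_upwards with v hv x hx
        rw [huIoc] at hv
        obtain ⟨hv0, hv1⟩ := hv
        have hx0 : 0 < x := by
          have := abs_lt.mp (Metric.mem_ball.mp hx); linarith [this.1]
        have hd : (0:ℝ) < 1 + x*(v/t) := by positivity
        have h1v : (0:ℝ) ≤ 1 - v := by linarith
        have hrw : F' x v = -((1-v) ^ p * v ^ (-a) * ((v/t) / (1 + x*(v/t))^2)) := by
          rw [hF']; ring
        rw [hrw, norm_neg, Real.norm_eq_abs, abs_of_nonneg (by positivity)]
        have hb1 : (1-v) ^ p ≤ 1 := Real.rpow_le_one h1v (by linarith) hp.le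
        have hsq : (1:ℝ) ≤ (1 + x*(v/t))^2 := by
          nlinarith [mul_nonneg hx0.le (div_nonneg hv0.le ht.le)]
        have hb2 : ((v:ℝ)/t) / (1 + x*(v/t))^2 ≤ v/t := by
          rw [div_le_iff₀ (by positivity)]
          nlinarith [div_nonneg hv0.le ht.le]
        have hBv : (0:ℝ) ≤ v ^ (-a) := Real.rpow_nonneg hv0.le _
        have e1 : (1-v) ^ p * v ^ (-a) * ((v/t) / (1 + x*(v/t))^2)
            ≤ (1-v) ^ p * v ^ (-a) * (v/t) :=
          mul_le_mul_of_nonneg_left hb2 (by positivity)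
        have e2 : (1-v) ^ p * v ^ (-a) * (v/t) ≤ 1 * v ^ (-a) * (v/t) :=
          mul_le_mul_of_nonneg_right (mul_le_mul_of_nonneg_right hb1 hBv)
            (div_nonneg hv0.le ht.le)
        have e3 : 1 * v ^ (-a) * (v/t) ≤ v ^ (-a) / t := by
          rw [one_mul, show v ^ (-a) * (v/t) = v ^ (-a) * v / t by ring]
          gcongr
          nlinarith
        linarith)
    ((intervalIntegrable_rpow' (by linarith)).div_const t)
    (by filter_upwards with v hv x hx
        rw [huIoc] at hv
        have hv0 := hv.1
        have hx0 : 0 < x := by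
          have := abs_lt.mp (Metric.mem_ball.mp hx); linarith [this.1]
        have hq : (0:ℝ) ≤ x*(v/t) := by positivity
        have hd : (0:ℝ) < 1 + x*(v/t) := by linarith
        have hinner : HasDerivAt (fun y : ℝ => 1 + y*(v/t)) (v/t) x := by
          simpa using ((hasDerivAt_id x).mul_const (v/t)).const_add 1
        exact (hinner.inv hd.ne').const_mul ((1-v) ^ p * v ^ (-a)))
  have hcong : ∀ᵐ v : ℝ, v ∈ Set.uIoc (0:ℝ) 1 →
      F' s v = (-(1/t)) * ((1-v) ^ p * v ^ (1-a) * (((1 + s*(v/t))^2)⁻¹)) := by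
    filter_upwards with v hv
    rw [huIoc] at hv
    have hv0 := hv.1
    have hvv : v ^ ((1:ℝ)-a) = v ^ (-a) * v := by
      rw [show (1:ℝ)-a = -a + 1 by ring, Real.rpow_add hv0, Real.rpow_one]
    have hq : (0:ℝ) ≤ s*(v/t) := by positivity
    have hd : (0:ℝ) < 1 + s*(v/t) := by linarith
    rw [hF', hvv]
    field_simp
  have heq : (∫ v in (0:ℝ)..1, F' s v)
      = -(1/t) * ∫ v in (0:ℝ)..1, (1-v) ^ p * v ^ (1-a) * (((1 + s*(v/t))^2)⁻¹) := by
    rw [intervalIntegral.integral_congr_ae hcong, intervalIntegral.integral_const_mul]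
  exact heq ▸ hmain.2

private lemma ibp' (p a s t : ℝ) (hp : 0 < p) (ha0 : 0 < a) (ha1 : a < 1)
    (hs : 0 < s) (ht : 0 < t) :
    (-p) * (∫ v in (0:ℝ)..1, (1-v) ^ (p-1) * v ^ (1-a) * (1 + s*(v/t))⁻¹)
      + (1-a) * (∫ v in (0:ℝ)..1, (1-v) ^ p * v ^ (-a) * (1 + s*(v/t))⁻¹)
      - (s/t) * (∫ v in (0:ℝ)..1, (1-v) ^ p * v ^ (1-a) * (((1 + s*(v/t))^2)⁻¹)) = 0 := by
  set T1 : ℝ → ℝ := fun v => (1-v) ^ (p-1) * v ^ (1-a) * (1 + s*(v/t))⁻¹ with hT1def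
  set T2 : ℝ → ℝ := fun v => (1-v) ^ p * v ^ (-a) * (1 + s*(v/t))⁻¹ with hT2def
  set T3 : ℝ → ℝ := fun v => (1-v) ^ p * v ^ (1-a) * (((1 + s*(v/t))^2)⁻¹) with hT3def
  set Φ : ℝ → ℝ := fun v => (1-v) ^ p * v ^ (1-a) * (1 + s*(v/t))⁻¹ with hΦdef
  set Φ' : ℝ → ℝ := fun v => (-p) * T1 v + (1-a) * T2 v - (s/t) * T3 v with hΦ'def
  have hbnd1 : ∀ v ∈ Set.Ioc (0:ℝ) 1, |(1 + s*(v/t))⁻¹| ≤ 1 := by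
    intro v hv
    have hq : (0:ℝ) ≤ s*(v/t) := by have := hv.1; positivity
    have hd : (0:ℝ) < 1 + s*(v/t) := by linarith
    rw [abs_of_pos (inv_pos.mpr hd), inv_le_one_iff₀]; right; linarith
  have hbnd2 : ∀ v ∈ Set.Ioc (0:ℝ) 1, |(((1 + s*(v/t))^2)⁻¹)| ≤ 1 := by
    intro v hv
    have hq : (0:ℝ) ≤ s*(v/t) := by have := hv.1; positivity
    have hd : (0:ℝ) < (1 + s*(v/t))^2 := by positivity
    rw [abs_of_pos (inv_pos.mpr hd), inv_le_one_iff₀]; right; nlinarith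
  have hi1 : IntervalIntegrable T1 volume 0 1 :=
    betaIntMul' (by linarith) (by linarith) (by fun_prop) hbnd1
  have hi2 : IntervalIntegrable T2 volume 0 1 :=
    betaIntMul' (by linarith) (by linarith) (by fun_prop) hbnd1
  have hi3 : IntervalIntegrable T3 volume 0 1 :=
    betaIntMul' (by linarith) (by linarith) (by fun_prop) hbnd2
  have hiΦ' : IntervalIntegrable Φ' volume 0 1 :=
    ((hi1.const_mul _).add (hi2.const_mul _)).sub (hi3.const_mul _)
  have hcont : ContinuousOn Φ (Set.Icc 0 1) := by
    apply ContinuousOn.mul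
    apply ContinuousOn.mul
    · exact ContinuousOn.rpow_const (Continuous.continuousOn (by continuity))
        (fun x hx => Or.inr hp.le)
    · exact ContinuousOn.rpow_const continuousOn_id (fun x hx => Or.inr (by linarith))
    · apply ContinuousOn.inv₀ (Continuous.continuousOn (by continuity))
      intro x hx
      have : (0:ℝ) ≤ s*(x/t) := by have := hx.1; positivity
      positivity
  have hderiv : ∀ v ∈ Set.Ioo (0:ℝ) 1, HasDerivAt Φ (Φ' v) v := by
    intro v hv
    obtain ⟨hv0, hv1⟩ := hv
    have h1v : (0:ℝ) < 1 - v := by linarith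
    have hq : (0:ℝ) ≤ s*(v/t) := by positivity
    have hd : (0:ℝ) < 1 + s*(v/t) := by linarith
    have d1 : HasDerivAt (fun v : ℝ => (1-v) ^ p) (-(p * (1-v) ^ (p-1))) v := by
      have := (((hasDerivAt_id v).const_sub 1)).rpow_const (p := p) (Or.inl h1v.ne')
      simpa using this
    have d2 : HasDerivAt (fun v : ℝ => v ^ (1-a)) ((1-a) * v ^ (-a)) v := by
      have := Real.hasDerivAt_rpow_const (x := v) (p := 1-a) (Or.inl hv0.ne')
      simpa [show (1:ℝ)-a-1 = -a by ring] using this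
    have d3 : HasDerivAt (fun v : ℝ => (1 + s*(v/t))⁻¹) (-(s/t) / (1 + s*(v/t))^2) v := by
      have hinner : HasDerivAt (fun v : ℝ => 1 + s*(v/t)) (s/t) v := by
        have h1 : HasDerivAt (fun v : ℝ => v * (s/t)) (s/t) v := by
          simpa using (hasDerivAt_id v).mul_const (s/t)
        have h2 := h1.const_add 1
        have h3 : (fun v : ℝ => 1 + v * (s/t)) = (fun v : ℝ => 1 + s*(v/t)) := by
          funext y; ring
        rwa [h3] at h2
      exact hinner.inv hd.ne'
    have := (d1.mul d2).mul d3
    refine this.congr_deriv ?_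
    rw [hΦ'def, hT1def, hT2def, hT3def]
    have hvv : v ^ ((1:ℝ)-a) = v ^ (-a) * v := by
      rw [show (1:ℝ)-a = -a + 1 by ring, Real.rpow_add hv0, Real.rpow_one]
    simp only [hvv, Pi.mul_apply]
    field_simp
    ring
  have hfund := intervalIntegral.integral_eq_sub_of_hasDeriv_right_of_le (by norm_num)
    hcont (fun x hx => (hderiv x hx).hasDerivWithinAt) hiΦ'
  have hΦ1 : Φ 1 = 0 := by
    rw [hΦdef]; simp [Real.zero_rpow hp.ne']
  have hΦ0 : Φ 0 = 0 := by
    rw [hΦdef]; simp [Real.zero_rpow (show (1:ℝ)-a ≠ 0 by linarith)]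
  have hsplit : (∫ v in (0:ℝ)..1, Φ' v)
      = (-p) * (∫ v in (0:ℝ)..1, T1 v) + (1-a) * (∫ v in (0:ℝ)..1, T2 v)
        - (s/t) * (∫ v in (0:ℝ)..1, T3 v) := by
    rw [hΦ'def]
    rw [intervalIntegral.integral_sub ((hi1.const_mul _).add (hi2.const_mul _)) (hi3.const_mul _),
      intervalIntegral.integral_add (hi1.const_mul _) (hi2.const_mul _),
      intervalIntegral.integral_const_mul, intervalIntegral.integral_const_mul,
      intervalIntegral.integral_const_mul]
  rw [← hsplit, hfund, hΦ1, hΦ0]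
  ring

private lemma pointR2' (p a s t : ℝ) (hp : 0 < p) (ha0 : 0 < a) (ha1 : a < 1)
    (hs : 0 < s) (ht : 0 < t) :
    (∫ v in (0:ℝ)..1, (1-v) ^ p * v ^ (-a) * (1 + s*(v/t))⁻¹)
      + (1+s/t) * (∫ v in (0:ℝ)..1, (1-v) ^ (p-1) * v ^ (1-a) * (1 + s*(v/t))⁻¹)
      = ∫ v in (0:ℝ)..1, (1-v) ^ (p-1) * v ^ (-a) := by
  have hbnd1 : ∀ v ∈ Set.Ioc (0:ℝ) 1, |(1 + s*(v/t))⁻¹| ≤ 1 := by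
    intro v hv
    have hq : (0:ℝ) ≤ s*(v/t) := by have := hv.1; positivity
    have hd : (0:ℝ) < 1 + s*(v/t) := by linarith
    rw [abs_of_pos (inv_pos.mpr hd), inv_le_one_iff₀]; right; linarith
  have hi1 : IntervalIntegrable (fun v => (1-v) ^ (p-1) * v ^ (1-a) * (1 + s*(v/t))⁻¹)
      volume 0 1 := betaIntMul' (by linarith) (by linarith) (by fun_prop) hbnd1
  have hi2 : IntervalIntegrable (fun v => (1-v) ^ p * v ^ (-a) * (1 + s*(v/t))⁻¹)
      volume 0 1 := betaIntMul' (by linarith) (by linarith) (by fun_prop) hbnd1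
  rw [← intervalIntegral.integral_const_mul, ← intervalIntegral.integral_add hi2 (hi1.const_mul _)]
  apply intervalIntegral.integral_congr_ae
  filter_upwards [ae_ne_one'] with v hv1 hv
  rw [Set.uIoc_of_le (by norm_num : (0:ℝ) ≤ 1)] at hv
  have hv0 : 0 < v := hv.1
  have hvlt : v < 1 := lt_of_le_of_ne hv.2 hv1
  have h1v : (0:ℝ) < 1 - v := by linarith
  have hq : (0:ℝ) ≤ s*(v/t) := by positivity
  have hd : (0:ℝ) < 1 + s*(v/t) := by linarith
  have e1 : (1-v) ^ (p-1) = (1-v) ^ p / (1-v) := by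
    rw [Real.rpow_sub h1v, Real.rpow_one]
  have e2 : v ^ ((1:ℝ)-a) = v * v ^ (-a) := by
    rw [show (1:ℝ)-a = 1 + -a by ring, Real.rpow_add hv0, Real.rpow_one]
  rw [e1, e2]
  have hva : (0:ℝ) < v ^ (-a) := Real.rpow_pos_of_pos hv0 _
  field_simp
  ring

end auxStmt2

/-- ∂I/∂s for I(s,t) = (s+t)^{-(n-2)/2} ∫₀^{s/t} (s-tb)^{(n-2)/2}/(b^{α/2}(1+b)) db:
it equals (n-2)t/(2(s+t)^{n/2}) ∫₀^{s/t} (s-tb)^{(n-4)/2} b^{-α/2} db, which is positive. -/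
theorem stmt2 (n : ℕ) (hn : 3 ≤ n) (α B : ℝ) (hα : α ∈ Set.Ioo (0 : ℝ) 2) (hB : 0 < B)
    (I : ℝ → ℝ → ℝ)
    (hI : ∀ s t : ℝ, 0 < s → 0 < t →
      I s t = (s + t) ^ (-(((n : ℝ) - 2) / 2)) *
        ∫ b in (0 : ℝ)..(s / t), (s - t * b) ^ (((n : ℝ) - 2) / 2) / (b ^ (α / 2) * (1 + b)))
    (s t : ℝ) (hs : 0 < s) (ht : 0 < t) :
    HasDerivAt (fun s' => I s' t)
      (((n : ℝ) - 2) * t / (2 * (s + t) ^ ((n : ℝ) / 2)) *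
        ∫ b in (0 : ℝ)..(s / t), (s - t * b) ^ (((n : ℝ) - 4) / 2) * b ^ (-(α / 2))) s ∧
    0 < ((n : ℝ) - 2) * t / (2 * (s + t) ^ ((n : ℝ) / 2)) *
        ∫ b in (0 : ℝ)..(s / t), (s - t * b) ^ (((n : ℝ) - 4) / 2) * b ^ (-(α / 2)) := by
  obtain ⟨hα0, hα2⟩ := hα
  have hn3 : (3:ℝ) ≤ (n:ℝ) := by exact_mod_cast hn
  set a : ℝ := α/2 with ha_def
  set p : ℝ := ((n:ℝ)-2)/2 with hp_def
  have ha0 : 0 < a := by rw [ha_def]; linarith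
  have ha1 : a < 1 := by rw [ha_def]; linarith
  have hp0 : 0 < p := by rw [hp_def]; linarith
  have hst : 0 < s + t := by linarith
  have hexp : ((n:ℝ)-4)/2 = p - 1 := by rw [hp_def]; ring
  rw [hexp]
  -- the target integral rewritten
  have hsubB := substB' s t (p-1) a hs ht
  have hBpos : 0 < ∫ v in (0:ℝ)..1, (1-v) ^ (p-1) * v ^ (-a) := by
    apply intervalIntegral.intervalIntegral_pos_of_pos_on
      (betaInt' (by linarith) (by linarith))
    · intro x hx
      have h1 : (0:ℝ) < 1 - x := by linarith [hx.2]
      have h2 : (0:ℝ) < x := hx.1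
      exact mul_pos (Real.rpow_pos_of_pos h1 _) (Real.rpow_pos_of_pos h2 _)
    · norm_num
  constructor
  · -- derivative part
    have hKd := Kderiv' p a s t hp0 ha0 ha1 hs ht
    have hq : HasDerivAt (fun x : ℝ => x ^ (p+1-a)) ((p+1-a) * s ^ (p+1-a-1)) s :=
      Real.hasDerivAt_rpow_const (Or.inl hs.ne')
    have h1 : HasDerivAt (fun x : ℝ => (x+t) ^ (-p)) (-p * (s+t) ^ (-p-1)) s := by
      have h0 : HasDerivAt (fun x : ℝ => x + t) 1 s := by
        simpa using (hasDerivAt_id s).add_const t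
      have := h0.rpow_const (p := -p) (Or.inl hst.ne')
      simpa using this
    have h2 := (hq.const_mul (t ^ (a-1))).mul hKd
    have hG := h1.mul h2
    have heq : (fun x => I x t) =ᶠ[nhds s]
        (fun x : ℝ => (x+t) ^ (-p) *
          (t ^ (a-1) * x ^ (p+1-a) *
            ∫ v in (0:ℝ)..1, (1-v) ^ p * v ^ (-a) * (1 + x*(v/t))⁻¹)) := by
      filter_upwards [Ioi_mem_nhds hs] with x hx
      rw [hI x t hx ht, substA' x t p a hx ht]
    have hfin := hG.congr_of_eventuallyEq heq
    refine hfin.congr_deriv ?_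
    rw [hsubB]
    -- now pure algebra with the integral identities
    have R1 := ibp' p a s t hp0 ha0 ha1 hs ht
    have R2 := pointR2' p a s t hp0 ha0 ha1 hs ht
    set AA := ∫ v in (0:ℝ)..1, (1-v) ^ p * v ^ (-a) * (1 + s*(v/t))⁻¹ with hAAd
    set DD := ∫ v in (0:ℝ)..1, (1-v) ^ (p-1) * v ^ (1-a) * (1 + s*(v/t))⁻¹ with hDDd
    set LL := ∫ v in (0:ℝ)..1, (1-v) ^ p * v ^ (1-a) * (((1 + s*(v/t))^2)⁻¹) with hLLd
    set BB := ∫ v in (0:ℝ)..1, (1-v) ^ (p-1) * v ^ (-a) with hBBd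
    have key : p*t*BB = -(p*s)*AA + (s+t)*((p+1-a)*AA - (s/t)*LL) := by
      linear_combination (-(s+t)) * R1 - (p*t) * R2
        + ((n:ℝ)*s*DD*(1/2) - s*DD) * (mul_inv_cancel₀ (ne_of_gt ht))
    have hpt : p*t ≠ 0 := by positivity
    have hBBval : BB = (-(p*s)*AA + (s+t)*((p+1-a)*AA - (s/t)*LL))/(p*t) := by
      rw [eq_div_iff hpt]; linear_combination key
    rw [hBBval]
    have d1 : (s+t) ^ (-p-1) = ((s+t) ^ p * (s+t))⁻¹ := by
      rw [show -p-1 = -(p+1) by ring, Real.rpow_neg hst.le, Real.rpow_add hst, Real.rpow_one]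
    have d2 : (s+t) ^ (-p) = ((s+t) ^ p)⁻¹ := by rw [Real.rpow_neg hst.le]
    have d3 : (s+t) ^ ((n:ℝ)/2) = (s+t) ^ p * (s+t) := by
      rw [show (n:ℝ)/2 = p+1 by rw [hp_def]; ring, Real.rpow_add hst, Real.rpow_one]
    have d4 : s ^ (p+1-a) = s ^ (p-a) * s := by
      rw [show p+1-a = (p-a)+1 by ring, Real.rpow_add hs, Real.rpow_one]
    have d5 : s ^ (p+1-a-1) = s ^ (p-a) := by rw [show p+1-a-1 = p-a by ring]
    have d6 : s ^ (p-1+1-a) = s ^ (p-a) := by rw [show p-1+1-a = p-a by ring]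
    have d7 : (n:ℝ)-2 = 2*p := by rw [hp_def]; ring
    simp only [Pi.mul_apply, ← hAAd]
    rw [d1, d2, d3, d4, d5, d6, d7]
    have hY : (0:ℝ) < (s+t) ^ p := Real.rpow_pos_of_pos hst _
    have hX : (0:ℝ) < s ^ (p-a) := Real.rpow_pos_of_pos hs _
    have hW : (0:ℝ) < t ^ (a-1) := Real.rpow_pos_of_pos ht _
    field_simp
    ring
  · rw [hsubB]
    have h2p : (0:ℝ) < (n:ℝ) - 2 := by linarith
    have hPN : (0:ℝ) < (s+t) ^ ((n:ℝ)/2) := Real.rpow_pos_of_pos hst _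
    have : (0:ℝ) < t ^ (a-1) * s ^ (p-1+1-a) :=
      mul_pos (Real.rpow_pos_of_pos ht _) (Real.rpow_pos_of_pos hs _)
    apply mul_pos
    · positivity
    · exact mul_pos this hBpos
end

section
/- Let n ≥ 3 and 0 < α < 2 and s, t > 0. Define I(s,t) = (s+t)^{-(n-2)/2} ∫₀^{s/t} (s - tb)^{(n-2)/2}/(b^{α/2}(1+b)) db. Then ∂I/∂t (s,t) = -(n-2)s / (2(s+t)^{n/2}) · ∫₀^{s/t} (s - tb)^{(n-4)/2} b^{-α/2} db < 0. -/
open Set intervalIntegral MeasureTheory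

lemma stmt3_intAux {s : ℝ} (hs : 0 < s) {a c : ℝ} (ha : -1 < a) (hc : -1 < c)
    {k : ℝ → ℝ} (hk : ContinuousOn k (Icc 0 s)) :
    IntervalIntegrable (fun u => u ^ a * (s - u) ^ c * k u) volume 0 s := by
  have h2 : (0:ℝ) < s / 2 := by linarith
  have part1 : IntervalIntegrable (fun u => u ^ a * (s - u) ^ c * k u) volume 0 (s/2) := by
    have : IntervalIntegrable (fun u => u ^ a * ((s - u) ^ c * k u)) volume 0 (s/2) := by
      apply (intervalIntegrable_rpow' ha).mul_continuousOn
      rw [uIcc_of_le (by linarith : (0:ℝ) ≤ s/2)]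
      refine ContinuousOn.mul ?_ (hk.mono (Icc_subset_Icc le_rfl (by linarith)))
      refine ContinuousOn.rpow_const (continuousOn_const.sub continuousOn_id) fun x hx => ?_
      exact Or.inl (by have h1 := hx.1; have h2 := hx.2; intro h; nlinarith [sub_eq_zero.1 h])
    simpa only [mul_assoc] using this
  have part2 : IntervalIntegrable (fun u => u ^ a * (s - u) ^ c * k u) volume (s/2) s := by
    have base : IntervalIntegrable (fun x : ℝ => x ^ c) volume 0 (s/2) :=
      intervalIntegrable_rpow' hc
    have base2 := (base.comp_sub_left s).symm
    rw [show s - 0 = s by ring, show s - s/2 = s/2 by ring] at base2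
    have : IntervalIntegrable (fun u => (u ^ a * k u) * (s - u) ^ c) volume (s/2) s := by
      apply base2.continuousOn_mul
      rw [uIcc_of_le (by linarith : s/2 ≤ s)]
      refine ContinuousOn.mul ?_ (hk.mono (Icc_subset_Icc (by linarith) le_rfl))
      refine ContinuousOn.rpow_const continuousOn_id fun x hx => ?_
      exact Or.inl (by intro h; nlinarith [hx.1])
    have he : (fun u : ℝ => u ^ a * (s - u) ^ c * k u)
        = fun u => (u ^ a * k u) * (s - u) ^ c := by funext u; ring
    rw [he]; exact this
  exact part1.trans part2


lemma stmt3_rpow_split {x : ℝ} (hx : 0 ≤ x) {r : ℝ} (hr : r ≠ 0) :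
    x ^ r = x * x ^ (r - 1) := by
  rcases hx.eq_or_lt' with h | h
  · subst h; simp [Real.zero_rpow hr]
  · rw [show r = 1 + (r - 1) by ring, Real.rpow_add h, Real.rpow_one]
    ring_nf


lemma stmt3_div_rpow_neg {x t q : ℝ} (hx : 0 ≤ x) (ht : 0 < t) (hq : q ≠ 0) :
    (x / t) ^ (-q) = x ^ (-q) * t ^ q := by
  rcases hx.eq_or_lt' with h | h
  · subst h; simp [Real.zero_rpow (neg_ne_zero.2 hq)]
  · rw [Real.div_rpow hx ht.le, Real.rpow_neg hx, Real.rpow_neg ht.le, div_eq_mul_inv, inv_inv]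

lemma stmt3_subst2 (s t p q : ℝ) (hs : 0 < s) (ht : 0 < t) (hq0 : 0 < q) :
    (∫ b in (0:ℝ)..(s / t), (s - t * b) ^ (p - 1) * b ^ (-q))
      = t⁻¹ * (t ^ q * ∫ u in (0:ℝ)..s, u ^ (p-1) * (s - u) ^ (-q)) := by
  have h := intervalIntegral.integral_comp_sub_div
    (a := 0) (b := s) (fun b => (s - t * b) ^ (p-1) * b ^ (-q)) ht.ne' (s / t)
  rw [sub_self, zero_div, sub_zero] at h
  have congr1 : (∫ x in (0:ℝ)..s, (s - t * (s/t - x/t)) ^ (p-1) * (s/t - x/t) ^ (-q))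
      = ∫ u in (0:ℝ)..s, t ^ q * (u ^ (p-1) * (s - u) ^ (-q)) := by
    apply intervalIntegral.integral_congr
    intro u hu
    rw [uIcc_of_le hs.le] at hu
    have e1 : s - t * (s/t - u/t) = u := by field_simp; ring
    have e2 : s/t - u/t = (s - u)/t := by ring
    have e3 : ((s - u)/t) ^ (-q) = (s - u) ^ (-q) * t ^ q := by
      rcases (sub_nonneg.2 hu.2).eq_or_lt' with h0 | h0
      · rw [h0]; simp [Real.zero_rpow (neg_ne_zero.2 hq0.ne')]
      · rw [Real.div_rpow (by linarith) ht.le, Real.rpow_neg (by linarith : (0:ℝ) ≤ s - u),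
          Real.rpow_neg ht.le, div_eq_mul_inv, inv_inv]
    beta_reduce
    rw [e1, e2, e3]
    ring
  rw [congr1, intervalIntegral.integral_const_mul] at h
  rw [smul_eq_mul] at h
  field_simp at h ⊢
  linarith [h]

lemma stmt3_subst1 (s τ p q : ℝ) (hs : 0 < s) (hτ : 0 < τ) (hp0 : 0 < p) (hq0 : 0 < q) :
    (∫ b in (0:ℝ)..(s / τ), (s - τ * b) ^ p / (b ^ q * (1 + b)))
      = τ ^ q * ∫ u in (0:ℝ)..s, u ^ p * (s - u) ^ (-q) * (τ + (s - u))⁻¹ := by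
  have h := intervalIntegral.integral_comp_sub_div
    (a := 0) (b := s) (fun b => (s - τ * b) ^ p / (b ^ q * (1 + b))) hτ.ne' (s / τ)
  rw [sub_self, zero_div, sub_zero] at h
  have congr1 : (∫ x in (0:ℝ)..s, (fun b => (s - τ * b) ^ p / (b ^ q * (1 + b))) (s/τ - x/τ))
      = ∫ u in (0:ℝ)..s, (τ ^ q * τ) * (u ^ p * (s - u) ^ (-q) * (τ + (s - u))⁻¹) := by
    apply intervalIntegral.integral_congr
    intro u hu
    rw [uIcc_of_le hs.le] at hu
    beta_reduce
    have e1 : s - τ * (s/τ - u/τ) = u := by field_simp; ring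
    have e2 : s/τ - u/τ = (s - u)/τ := by ring
    have e4 : ((s - u)/τ) ^ q = (s - u) ^ q / τ ^ q :=
      Real.div_rpow (by linarith [hu.2]) hτ.le q
    have e5 : (s - u) ^ (-q) = ((s - u) ^ q)⁻¹ :=
      Real.rpow_neg (by linarith [hu.2]) q
    have e6 : 1 + (s - u)/τ = (τ + (s - u))/τ := by field_simp
    rw [e1, e2, e4, e6, e5]
    rcases eq_or_ne ((s - u) ^ q) 0 with h0 | h0
    · simp [h0]
    · have hτq : τ ^ q ≠ 0 := (Real.rpow_pos_of_pos hτ q).ne'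
      have hd : τ + (s - u) ≠ 0 := by nlinarith [hu.2]
      field_simp
  rw [congr1, intervalIntegral.integral_const_mul, smul_eq_mul] at h
  have hτ0 : τ ≠ 0 := hτ.ne'
  have h2 : τ * (τ ^ q * ∫ u in (0:ℝ)..s, u ^ p * (s - u) ^ (-q) * (τ + (s - u))⁻¹)
      = τ * (∫ b in (0:ℝ)..(s/τ), (s - τ * b) ^ p / (b ^ q * (1 + b))) := by
    linear_combination h
  exact (mul_left_cancel₀ hτ0 h2).symm

lemma stmt3_meas (s c r : ℝ) (g : ℝ → ℝ) (hg : Measurable g) :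
    AEStronglyMeasurable (fun u : ℝ => u ^ c * (s - u) ^ r * g u)
      (volume.restrict (Set.uIoc (0:ℝ) s)) := by
  refine Measurable.aestronglyMeasurable ?_
  exact (((measurable_id.pow measurable_const)).mul ((measurable_const.sub measurable_id).pow measurable_const)).mul hg


lemma stmt3_hasDerivM (s t p q : ℝ) (hs : 0 < s) (ht : 0 < t) (hp0 : 0 < p) (hqn : -1 < -q) :
    HasDerivAt (fun τ => ∫ u in (0:ℝ)..s, u ^ p * (s - u) ^ (-q) * (τ + (s - u))⁻¹)
      (∫ u in (0:ℝ)..s, -(u ^ p * (s - u) ^ (-q) * ((t + (s - u)) ^ 2)⁻¹)) t := by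
  have hcont : ∀ m : ℝ, 0 < m → ContinuousOn (fun u : ℝ => (m + (s - u))⁻¹) (Icc 0 s) := by
    intro m hm
    refine ContinuousOn.inv₀ (continuousOn_const.add (continuousOn_const.sub continuousOn_id))
      fun x hx => ?_
    have := hx.2; intro h; nlinarith
  have key := intervalIntegral.hasDerivAt_integral_of_dominated_loc_of_deriv_le
    (F := fun τ u => u ^ p * (s - u) ^ (-q) * (τ + (s - u))⁻¹)
    (F' := fun τ u => -(u ^ p * (s - u) ^ (-q) * ((τ + (s - u)) ^ 2)⁻¹))
    (a := 0) (b := s) (μ := volume) (x₀ := t)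
    (bound := fun u => u ^ p * (s - u) ^ (-q) * ((t/2) ^ 2)⁻¹)
    (Metric.ball_mem_nhds t (by positivity : (0:ℝ) < t/2))
    (Filter.Eventually.of_forall fun τ => stmt3_meas s p (-q) _
      ((measurable_const.add (measurable_const.sub measurable_id)).inv))
    (stmt3_intAux hs (by linarith) hqn (hcont t ht))
    ?meas' ?bound ?boundint ?diff
  · exact key.2
  case meas' =>
    have := (stmt3_meas s p (-q)
      (fun u : ℝ => ((t + (s - u)) ^ 2)⁻¹)
      (((measurable_const.add (measurable_const.sub measurable_id)).pow_const 2).inv))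
    exact this.neg
  case bound =>
    refine Filter.Eventually.of_forall fun u hu τ hτ => ?_
    rw [uIoc_of_le hs.le] at hu
    rw [Metric.mem_ball, Real.dist_eq, abs_lt] at hτ
    have hu1 : 0 < u := hu.1
    have hu2 : u ≤ s := hu.2
    have hd : t/2 < τ + (s - u) := by linarith [hτ.1, hτ.2]
    have hw : 0 ≤ u ^ p * (s - u) ^ (-q) :=
      mul_nonneg (Real.rpow_nonneg hu1.le p) (Real.rpow_nonneg (by linarith) (-q))
    rw [norm_neg, Real.norm_eq_abs, abs_of_nonneg (by positivity)]
    show u ^ p * (s - u) ^ (-q) * ((τ + (s - u)) ^ 2)⁻¹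
      ≤ u ^ p * (s - u) ^ (-q) * ((t/2) ^ 2)⁻¹
    refine mul_le_mul_of_nonneg_left ?_ hw
    have h1 : (0:ℝ) < (t/2)^2 := by positivity
    exact inv_anti₀ h1 (by nlinarith)
  case boundint =>
    exact stmt3_intAux hs (by linarith) hqn (continuousOn_const)
  case diff =>
    refine Filter.Eventually.of_forall fun u hu τ hτ => ?_
    rw [uIoc_of_le hs.le] at hu
    rw [Metric.mem_ball, Real.dist_eq, abs_lt] at hτ
    have hd : τ + (s - u) ≠ 0 := by nlinarith [hτ.1, hτ.2, hu.1, hu.2]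
    have h1 : HasDerivAt (fun τ : ℝ => τ + (s - u)) 1 τ := (hasDerivAt_id τ).add_const (s - u)
    have h2 := (h1.inv hd).const_mul (u ^ p * (s - u) ^ (-q))
    refine h2.congr_deriv ?_
    ring

lemma stmt3_contInv (s : ℝ) (m : ℝ) (hm : 0 < m) :
    ContinuousOn (fun u : ℝ => (m + (s - u))⁻¹) (Icc 0 s) := by
  refine ContinuousOn.inv₀ (continuousOn_const.add (continuousOn_const.sub continuousOn_id))
    fun x hx => ?_
  have := hx.2; intro h; nlinarith


lemma stmt3_contInv2 (s : ℝ) (m : ℝ) (hm : 0 < m) :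
    ContinuousOn (fun u : ℝ => ((m + (s - u)) ^ 2)⁻¹) (Icc 0 s) := by
  refine ContinuousOn.inv₀
    ((continuousOn_const.add (continuousOn_const.sub continuousOn_id)).pow 2)
    fun x hx => ?_
  exact pow_ne_zero 2 (by nlinarith [hx.2] : (0:ℝ) < m + (s - x)).ne'


lemma stmt3_int4 (s p q : ℝ) (hs : 0 < s) (hp1 : -1 < p - 1) (hqn : -1 < -q) :
    IntervalIntegrable (fun u => u ^ (p-1) * (s - u) ^ (-q)) volume 0 s := by
  have h := stmt3_intAux (k := fun _ => (1:ℝ)) hs hp1 hqn continuousOn_const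
  have he : (fun u : ℝ => u ^ (p-1) * (s - u) ^ (-q))
      = fun u => u ^ (p-1) * (s - u) ^ (-q) * (fun _ : ℝ => (1:ℝ)) u := by
    funext u; simp
  rw [he]; exact h


lemma stmt3_IBP (s t p q : ℝ) (hs : 0 < s) (ht : 0 < t) (hp0 : 0 < p) (hp1 : -1 < p - 1)
    (hq0 : 0 < q) (hq1 : q < 1) :
    p * (∫ u in (0:ℝ)..s, u ^ (p-1) * (s - u) ^ (-q))
      - p * t * (∫ u in (0:ℝ)..s, u ^ (p-1) * (s - u) ^ (-q) * (t + (s - u))⁻¹)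
      + q * (∫ u in (0:ℝ)..s, u ^ p * (s - u) ^ (-q) * (t + (s - u))⁻¹)
      - t * (∫ u in (0:ℝ)..s, u ^ p * (s - u) ^ (-q) * ((t + (s - u)) ^ 2)⁻¹) = 0 := by
  have hqn : -1 < -q := by linarith
  have h1q : -1 < 1 - q := by linarith
  have hq1' : (1:ℝ) - q ≠ 0 := sub_ne_zero.mpr (by linarith)
  set φ : ℝ → ℝ := fun u => u ^ p * (s - u) ^ (1 - q) * (t + (s - u))⁻¹ with hφ
  set g' : ℝ → ℝ := fun u =>
      p * (u ^ (p-1) * (s - u) ^ (1-q) * (t + (s - u))⁻¹)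
      - (1 - q) * (u ^ p * (s - u) ^ (-q) * (t + (s - u))⁻¹)
      + u ^ p * (s - u) ^ (1-q) * ((t + (s - u)) ^ 2)⁻¹ with hg'
  have int1 : IntervalIntegrable (fun u => u ^ (p-1) * (s - u) ^ (1-q) * (t + (s - u))⁻¹)
      volume 0 s := stmt3_intAux hs hp1 h1q (stmt3_contInv s t ht)
  have int2 : IntervalIntegrable (fun u => u ^ p * (s - u) ^ (-q) * (t + (s - u))⁻¹)
      volume 0 s := stmt3_intAux hs (by linarith) hqn (stmt3_contInv s t ht)
  have int3 : IntervalIntegrable (fun u => u ^ p * (s - u) ^ (1-q) * ((t + (s - u)) ^ 2)⁻¹)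
      volume 0 s := stmt3_intAux hs (by linarith) h1q (stmt3_contInv2 s t ht)
  have int4 : IntervalIntegrable (fun u => u ^ (p-1) * (s - u) ^ (-q))
      volume 0 s := stmt3_int4 s p q hs hp1 hqn
  have int5 : IntervalIntegrable (fun u => u ^ (p-1) * (s - u) ^ (-q) * (t + (s - u))⁻¹)
      volume 0 s := stmt3_intAux hs hp1 hqn (stmt3_contInv s t ht)
  have int6 : IntervalIntegrable (fun u => u ^ p * (s - u) ^ (-q) * ((t + (s - u)) ^ 2)⁻¹)
      volume 0 s := stmt3_intAux hs (by linarith) hqn (stmt3_contInv2 s t ht)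
  have intg' : IntervalIntegrable g' volume 0 s := by
    rw [hg']
    exact ((int1.const_mul p).sub (int2.const_mul (1-q))).add int3
  have ftc : (∫ u in (0:ℝ)..s, g' u) = φ s - φ 0 := by
    apply intervalIntegral.integral_eq_sub_of_hasDeriv_right_of_le hs.le
    · rw [hφ]
      refine ContinuousOn.mul (ContinuousOn.mul ?_ ?_) (stmt3_contInv s t ht)
      · exact continuousOn_id.rpow_const fun x hx => Or.inr hp0.le
      · exact (continuousOn_const.sub continuousOn_id).rpow_const fun x hx => Or.inr (by linarith)
    · intro u hu
      have hu1 : 0 < u := hu.1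
      have hu2 : 0 < s - u := by have := hu.2; linarith
      have hd : 0 < t + (s - u) := by linarith
      have d1 : HasDerivAt (fun u : ℝ => u ^ p) (p * u ^ (p-1)) u :=
        Real.hasDerivAt_rpow_const (Or.inl hu1.ne')
      have d2 : HasDerivAt (fun u : ℝ => (s - u) ^ (1-q)) (-((1-q) * (s - u) ^ (-q))) u := by
        have inner : HasDerivAt (fun u : ℝ => s - u) (-1) u := by
          simpa using (hasDerivAt_id u).const_sub s
        have h := inner.rpow_const (p := 1 - q) (Or.inl hu2.ne')
        rw [show (1 - q - 1 : ℝ) = -q by ring] at h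
        convert h using 1; ring
      have inner2 : HasDerivAt (fun u : ℝ => t + (s - u)) (-1) u := by
        simpa using ((hasDerivAt_id u).const_sub s).const_add t
      have d3 := inner2.inv hd.ne'
      have dφ : HasDerivAt φ (g' u) u := by
        have hmul := (d1.mul d2).mul d3
        rw [hφ, hg']
        beta_reduce
        refine hmul.congr_deriv ?_
        simp only [Pi.mul_apply, Pi.inv_apply]
        field_simp
        ring
      exact dφ.hasDerivWithinAt
    · exact intg'.mono_set (by rw [uIcc_of_le hs.le])
  have hends : φ s - φ 0 = 0 := by
    rw [hφ]; beta_reduce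
    rw [sub_self, Real.zero_rpow hq1', Real.zero_rpow hp0.ne']
    ring
  have split : (∫ u in (0:ℝ)..s, g' u)
      = ∫ u in (0:ℝ)..s, (p * (u ^ (p-1) * (s - u) ^ (-q))
          - (p * t) * (u ^ (p-1) * (s - u) ^ (-q) * (t + (s - u))⁻¹)
          + q * (u ^ p * (s - u) ^ (-q) * (t + (s - u))⁻¹)
          - t * (u ^ p * (s - u) ^ (-q) * ((t + (s - u)) ^ 2)⁻¹)) := by
    apply intervalIntegral.integral_congr
    intro u hu
    rw [uIcc_of_le hs.le] at hu
    rw [hg']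
    beta_reduce
    have e1 : (s - u) ^ (1-q) = (s - u) * (s - u) ^ (-q) := by
      rw [stmt3_rpow_split (by linarith [hu.2] : (0:ℝ) ≤ s - u) hq1',
        show (1 - q - 1 : ℝ) = -q by ring]
    have hd : t + (s - u) ≠ 0 := by have := hu.2; intro h; nlinarith
    rw [e1]
    field_simp
    ring
  have lin : (∫ u in (0:ℝ)..s, (p * (u ^ (p-1) * (s - u) ^ (-q))
          - (p * t) * (u ^ (p-1) * (s - u) ^ (-q) * (t + (s - u))⁻¹)
          + q * (u ^ p * (s - u) ^ (-q) * (t + (s - u))⁻¹)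
          - t * (u ^ p * (s - u) ^ (-q) * ((t + (s - u)) ^ 2)⁻¹)))
      = p * (∫ u in (0:ℝ)..s, u ^ (p-1) * (s - u) ^ (-q))
      - p * t * (∫ u in (0:ℝ)..s, u ^ (p-1) * (s - u) ^ (-q) * (t + (s - u))⁻¹)
      + q * (∫ u in (0:ℝ)..s, u ^ p * (s - u) ^ (-q) * (t + (s - u))⁻¹)
      - t * (∫ u in (0:ℝ)..s, u ^ p * (s - u) ^ (-q) * ((t + (s - u)) ^ 2)⁻¹) := by
    rw [intervalIntegral.integral_sub (((int4.const_mul p).sub (int5.const_mul (p*t))).add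
        (int2.const_mul q)) (int6.const_mul t),
      intervalIntegral.integral_add ((int4.const_mul p).sub (int5.const_mul (p*t)))
        (int2.const_mul q),
      intervalIntegral.integral_sub (int4.const_mul p) (int5.const_mul (p*t)),
      intervalIntegral.integral_const_mul, intervalIntegral.integral_const_mul,
      intervalIntegral.integral_const_mul, intervalIntegral.integral_const_mul]
  have h0 : (∫ u in (0:ℝ)..s, g' u) = 0 := ftc.trans hends
  rw [split, lin] at h0
  exact h0

lemma stmt3_R2 (s t p q : ℝ) (hs : 0 < s) (ht : 0 < t) (hp0 : 0 < p) (hp1 : -1 < p - 1)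
    (hqn : -1 < -q) :
    (s + t) * (∫ u in (0:ℝ)..s, u ^ (p-1) * (s - u) ^ (-q) * (t + (s - u))⁻¹)
      = (∫ u in (0:ℝ)..s, u ^ p * (s - u) ^ (-q) * (t + (s - u))⁻¹)
        + (∫ u in (0:ℝ)..s, u ^ (p-1) * (s - u) ^ (-q)) := by
  have int2 : IntervalIntegrable (fun u => u ^ p * (s - u) ^ (-q) * (t + (s - u))⁻¹)
      volume 0 s := stmt3_intAux hs (by linarith) hqn (stmt3_contInv s t ht)
  have int4 : IntervalIntegrable (fun u => u ^ (p-1) * (s - u) ^ (-q))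
      volume 0 s := stmt3_int4 s p q hs hp1 hqn
  rw [← intervalIntegral.integral_const_mul, ← intervalIntegral.integral_add int2 int4]
  apply intervalIntegral.integral_congr
  intro u hu
  rw [uIcc_of_le hs.le] at hu
  have hd : t + (s - u) ≠ 0 := by have := hu.2; intro h; nlinarith
  have e : u ^ p = u * u ^ (p - 1) := stmt3_rpow_split hu.1 hp0.ne'
  beta_reduce
  rw [e]
  field_simp
  ring

/-- ∂I/∂t for I(s,t) = (s+t)^{-(n-2)/2} ∫₀^{s/t} (s-tb)^{(n-2)/2}/(b^{α/2}(1+b)) db: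
it equals -(n-2)s/(2(s+t)^{n/2}) ∫₀^{s/t} (s-tb)^{(n-4)/2} b^{-α/2} db, which is negative. -/
theorem stmt3 (n : ℕ) (hn : 3 ≤ n) (α : ℝ) (hα : α ∈ Set.Ioo (0 : ℝ) 2)
    (I : ℝ → ℝ → ℝ)
    (hI : ∀ s t : ℝ, 0 < s → 0 < t →
      I s t = (s + t) ^ (-(((n : ℝ) - 2) / 2)) *
        ∫ b in (0 : ℝ)..(s / t), (s - t * b) ^ (((n : ℝ) - 2) / 2) / (b ^ (α / 2) * (1 + b)))
    (s t : ℝ) (hs : 0 < s) (ht : 0 < t) :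
    HasDerivAt (fun t' => I s t')
      (-(((n : ℝ) - 2) * s / (2 * (s + t) ^ ((n : ℝ) / 2))) *
        ∫ b in (0 : ℝ)..(s / t), (s - t * b) ^ (((n : ℝ) - 4) / 2) * b ^ (-(α / 2))) t ∧
    -(((n : ℝ) - 2) * s / (2 * (s + t) ^ ((n : ℝ) / 2))) *
        ∫ b in (0 : ℝ)..(s / t), (s - t * b) ^ (((n : ℝ) - 4) / 2) * b ^ (-(α / 2)) < 0 := by
  obtain ⟨hα0, hα2⟩ := hα
  have hn3 : (3:ℝ) ≤ (n:ℝ) := by exact_mod_cast hn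
  set p : ℝ := ((n:ℝ) - 2) / 2 with hpdef
  set q : ℝ := α / 2 with hqdef
  have hp0 : 0 < p := by rw [hpdef]; linarith
  have hp1 : -1 < p - 1 := by rw [hpdef]; linarith
  have hq0 : 0 < q := by rw [hqdef]; linarith
  have hq1 : q < 1 := by rw [hqdef]; linarith
  have hqn : -1 < -q := by linarith
  have hst : 0 < s + t := by linarith
  have hexp1 : ((n:ℝ) - 4)/2 = p - 1 := by rw [hpdef]; ring
  have hexp2 : (n:ℝ)/2 = p + 1 := by rw [hpdef]; ring
  have hn2 : ((n:ℝ) - 2) = 2*p := by rw [hpdef]; ring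
  rw [hexp1, hexp2, stmt3_subst2 s t p q hs ht hq0]
  set M : ℝ := ∫ u in (0:ℝ)..s, u ^ p * (s - u) ^ (-q) * (t + (s - u))⁻¹ with hMdef
  set N : ℝ := ∫ u in (0:ℝ)..s, u ^ (p-1) * (s - u) ^ (-q) with hNdef
  set P : ℝ := ∫ u in (0:ℝ)..s, u ^ p * (s - u) ^ (-q) * ((t + (s - u)) ^ 2)⁻¹ with hPdef
  set Q : ℝ := ∫ u in (0:ℝ)..s, u ^ (p-1) * (s - u) ^ (-q) * (t + (s - u))⁻¹ with hQdef
  have R1 := stmt3_IBP s t p q hs ht hp0 hp1 hq0 hq1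
  have R2 := stmt3_R2 s t p q hs ht hp0 hp1 hqn
  rw [← hQdef] at R1 R2
  have R3 : (s + t) * (q * M - t * P) = p * t * M - p * s * N := by
    linear_combination (s + t) * R1 + p * t * R2
  -- rpow facts
  have hY : (0:ℝ) < (s + t) ^ (p + 1) := Real.rpow_pos_of_pos hst _
  have e1 : (s + t) ^ (-p - 1) = ((s + t) ^ (p + 1))⁻¹ := by
    rw [show -p - 1 = -(p+1) by ring, Real.rpow_neg hst.le]
  have e2 : (s + t) ^ (-p) = (s + t) * ((s + t) ^ (p + 1))⁻¹ := by
    rw [show -p = 1 + -(p+1) by ring, Real.rpow_add hst, Real.rpow_one,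
      Real.rpow_neg hst.le]
  have e3 : t ^ (q - 1) = t ^ q * t⁻¹ := by
    rw [show q - 1 = q + -1 by ring, Real.rpow_add ht, Real.rpow_neg_one]
  have htq : (0:ℝ) < t ^ q := Real.rpow_pos_of_pos ht _
  constructor
  · -- the derivative
    have hM := stmt3_hasDerivM s t p q hs ht hp0 hqn
    rw [intervalIntegral.integral_neg, ← hPdef] at hM
    have h1 : HasDerivAt (fun τ : ℝ => (s + τ) ^ (-p)) (-p * (s + t) ^ (-p - 1)) t := by
      have h0 := ((hasDerivAt_id t).const_add s).rpow_const (p := -p) (Or.inl hst.ne')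
      simp only [id_eq, one_mul] at h0
      exact h0
    have h2 : HasDerivAt (fun τ : ℝ => τ ^ q) (q * t ^ (q - 1)) t :=
      Real.hasDerivAt_rpow_const (Or.inl ht.ne')
    have hprod := h1.mul (h2.mul hM)
    have hev : (fun τ => I s τ) =ᶠ[nhds t]
        (fun τ => (s + τ) ^ (-p) * (τ ^ q * ∫ u in (0:ℝ)..s,
          u ^ p * (s - u) ^ (-q) * (τ + (s - u))⁻¹)) := by
      filter_upwards [isOpen_Ioi.mem_nhds ht] with τ hτ
      rw [hI s τ hs hτ, stmt3_subst1 s τ p q hs hτ hp0 hq0]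
    have hfinal := hprod.congr_of_eventuallyEq hev
    have heq : -(((n:ℝ) - 2) * s / (2 * (s + t) ^ (p + 1))) * (t⁻¹ * (t ^ q * N))
        = -p * (s + t) ^ (-p - 1) * (t ^ q * M)
          + (s + t) ^ (-p) * (q * t ^ (q - 1) * M + t ^ q * -P) := by
      rw [hn2, e1, e2, e3, div_eq_mul_inv, mul_inv]
      have htt : t * t⁻¹ = 1 := mul_inv_cancel₀ ht.ne'
      linear_combination (-(t⁻¹ * ((s+t)^(p+1))⁻¹ * t ^ q)) * R3
        - (((s+t)^(p+1))⁻¹ * t ^ q * (p * M + (s+t) * P)) * htt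
    rw [heq]
    exact hfinal
  · -- negativity
    have int4 : IntervalIntegrable (fun u => u ^ (p-1) * (s - u) ^ (-q))
        volume 0 s := stmt3_int4 s p q hs hp1 hqn
    have hNpos : 0 < N := by
      rw [hNdef]
      refine intervalIntegral.intervalIntegral_pos_of_pos_on int4 (fun x hx => ?_) hs
      exact mul_pos (Real.rpow_pos_of_pos hx.1 _)
        (Real.rpow_pos_of_pos (by linarith [hx.2]) _)
    have hApos : 0 < ((n:ℝ) - 2) * s / (2 * (s + t) ^ (p + 1)) := by
      apply div_pos (mul_pos (by linarith) hs) (by positivity)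
    have hBpos : 0 < t⁻¹ * (t ^ q * N) :=
      mul_pos (inv_pos.2 ht) (mul_pos htq hNpos)
    rw [neg_mul]
    exact neg_lt_zero.2 (mul_pos hApos hBpos)
end

section
/- Let n ≥ 3, 0 < α < 2, B > 0, and suppose H(s,t) = s^{-(n-α)/2}(1 - B·I(s,t)) with I as above, and suppose 1 - B·I(s,t) ≥ 0 for all s,t > 0 (nonnegativity of the Green's function). Then for all s, t > 0, ∂H/∂s (s,t) < 0 and ∂H/∂t (s,t) > 0. -/
open Set intervalIntegral MeasureTheory

/-- Beta-type integrability with a continuous weight. -/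
lemma betaInt {a b : ℝ} (ha : -1 < a) (hb : -1 < b) (ρ : ℝ → ℝ)
    (hρ : ContinuousOn ρ (Icc 0 1)) :
    IntervalIntegrable (fun u : ℝ => u ^ a * (1-u) ^ b * ρ u) volume 0 1 := by
  have h1 : IntervalIntegrable (fun u : ℝ => u ^ a * (1-u) ^ b * ρ u) volume 0 (1/2) := by
    have hr : IntervalIntegrable (fun u : ℝ => u ^ a) volume 0 (1/2) :=
      intervalIntegral.intervalIntegrable_rpow' ha
    have hcont : ContinuousOn (fun u : ℝ => (1-u) ^ b * ρ u) (uIcc 0 (1/2)) := by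
      rw [uIcc_of_le (by norm_num)]
      apply ContinuousOn.mul
      · apply ContinuousOn.rpow_const (by fun_prop)
        intro x hx
        left
        have := hx.2
        intro h
        norm_num at h
        nlinarith [hx.2]
      · exact hρ.mono (by intro x hx; exact ⟨hx.1, by linarith [hx.2]⟩)
    simpa [mul_assoc] using hr.mul_continuousOn hcont
  have h2 : IntervalIntegrable (fun u : ℝ => u ^ a * (1-u) ^ b * ρ u) volume (1/2) 1 := by
    have hr : IntervalIntegrable (fun u : ℝ => (1-u) ^ b) volume (1/2) 1 := by
      have := (intervalIntegral.intervalIntegrable_rpow' (a := 1/2) (b := 0) hb).comp_sub_left 1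
      norm_num at this
      exact this
    have hcont : ContinuousOn (fun u : ℝ => u ^ a * ρ u) (uIcc (1/2) 1) := by
      rw [uIcc_of_le (by norm_num)]
      apply ContinuousOn.mul
      · apply ContinuousOn.rpow_const (by fun_prop)
        intro x hx
        left
        nlinarith [hx.1]
      · exact hρ.mono (by intro x hx; exact ⟨by linarith [hx.1], hx.2⟩)
    have := hr.mul_continuousOn hcont
    exact this.congr (fun x _ => by ring)
  exact h1.trans h2

section aux
variable (α p : ℝ)

noncomputable def Jf (l : ℝ) : ℝ := ∫ u in (0:ℝ)..1, u ^ (-(α/2)) * (1-u) ^ p / (1+l*u)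
noncomputable def Jbf (l : ℝ) : ℝ := ∫ u in (0:ℝ)..1, u ^ (1-α/2) * (1-u) ^ (p-1) / (1+l*u)
noncomputable def Jdf (l : ℝ) : ℝ := ∫ u in (0:ℝ)..1, u ^ (1-α/2) * (1-u) ^ p / (1+l*u)^2

variable {α p : ℝ}

lemma cont_inv1 {l : ℝ} (hl : 0 ≤ l) : ContinuousOn (fun u : ℝ => (1+l*u)⁻¹) (Icc 0 1) := by
  apply ContinuousOn.inv₀ (by fun_prop)
  intro x hx
  nlinarith [hx.1, hx.2]

lemma cont_inv2 {l : ℝ} (hl : 0 ≤ l) : ContinuousOn (fun u : ℝ => ((1+l*u)^2)⁻¹) (Icc 0 1) := by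
  apply ContinuousOn.inv₀ (by fun_prop)
  intro x hx
  exact pow_ne_zero _ (by nlinarith [hx.1, hx.2])

lemma Jint (hα : α ∈ Ioo (0:ℝ) 2) (hp : 0 < p) {l : ℝ} (hl : 0 ≤ l) :
    IntervalIntegrable (fun u : ℝ => u ^ (-(α/2)) * (1-u) ^ p / (1+l*u)) volume 0 1 := by
  simpa [div_eq_mul_inv] using
    betaInt (by nlinarith [hα.1, hα.2] : (-1:ℝ) < -(α/2)) (by linarith) _ (cont_inv1 hl)

lemma Jbint (hα : α ∈ Ioo (0:ℝ) 2) (hp : 0 < p) {l : ℝ} (hl : 0 ≤ l) :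
    IntervalIntegrable (fun u : ℝ => u ^ (1-α/2) * (1-u) ^ (p-1) / (1+l*u)) volume 0 1 := by
  simpa [div_eq_mul_inv] using
    betaInt (by nlinarith [hα.1, hα.2] : (-1:ℝ) < 1-α/2) (by linarith) _ (cont_inv1 hl)

lemma Jdint (hα : α ∈ Ioo (0:ℝ) 2) (hp : 0 < p) {l : ℝ} (hl : 0 ≤ l) :
    IntervalIntegrable (fun u : ℝ => u ^ (1-α/2) * (1-u) ^ p / (1+l*u)^2) volume 0 1 := by
  simpa [div_eq_mul_inv] using
    betaInt (by nlinarith [hα.1, hα.2] : (-1:ℝ) < 1-α/2) (by linarith) _ (cont_inv2 hl)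

lemma Jpos (hα : α ∈ Ioo (0:ℝ) 2) (hp : 0 < p) {l : ℝ} (hl : 0 ≤ l) : 0 < Jf α p l := by
  apply intervalIntegral.intervalIntegral_pos_of_pos_on (Jint hα hp hl)
  · intro x hx
    have h1 : (0:ℝ) < x ^ (-(α/2)) := Real.rpow_pos_of_pos hx.1 _
    have h2 : (0:ℝ) < (1-x) ^ p := Real.rpow_pos_of_pos (by linarith [hx.2]) _
    have h3 : (0:ℝ) < 1 + l * x := by nlinarith [hx.1]
    positivity
  · norm_num

lemma Jbnonneg (hα : α ∈ Ioo (0:ℝ) 2) (hp : 0 < p) {l : ℝ} (hl : 0 ≤ l) : 0 ≤ Jbf α p l := by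
  apply intervalIntegral.integral_nonneg (by norm_num)
  intro u hu
  have h1 : (0:ℝ) ≤ u ^ (1-α/2) := Real.rpow_nonneg hu.1 _
  have h2 : (0:ℝ) ≤ (1-u) ^ (p-1) := Real.rpow_nonneg (by linarith [hu.2]) _
  have h3 : (0:ℝ) < 1 + l * u := by nlinarith [hu.1]
  positivity

lemma IBP (hα : α ∈ Ioo (0:ℝ) 2) (hp : 0 < p) {l : ℝ} (hl : 0 < l) :
    (1-α/2) * Jf α p l = p * Jbf α p l + l * Jdf α p l := by
  have ha1 : (0:ℝ) < 1 - α/2 := by nlinarith [hα.2]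
  have i1 := (Jint hα hp hl.le).const_mul (1-α/2)
  have i2 := (Jbint hα hp hl.le).const_mul p
  have i3 := (Jdint hα hp hl.le).const_mul l
  have key : (∫ u in (0:ℝ)..1,
      ((1-α/2) * (u ^ (-(α/2)) * (1-u) ^ p / (1+l*u))
        - p * (u ^ (1-α/2) * (1-u) ^ (p-1) / (1+l*u))
        - l * (u ^ (1-α/2) * (1-u) ^ p / (1+l*u)^2)))
      = (fun u : ℝ => u ^ (1-α/2) * (1-u) ^ p * (1+l*u)⁻¹) 1
        - (fun u : ℝ => u ^ (1-α/2) * (1-u) ^ p * (1+l*u)⁻¹) 0 := by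
    apply intervalIntegral.integral_eq_sub_of_hasDerivAt_of_le
      (f := fun u : ℝ => u ^ (1-α/2) * (1-u) ^ p * (1+l*u)⁻¹)
      (f' := fun u : ℝ =>
        (1-α/2) * (u ^ (-(α/2)) * (1-u) ^ p / (1+l*u))
        - p * (u ^ (1-α/2) * (1-u) ^ (p-1) / (1+l*u))
        - l * (u ^ (1-α/2) * (1-u) ^ p / (1+l*u)^2)) (by norm_num)
    · apply ContinuousOn.mul (ContinuousOn.mul ?_ ?_) (cont_inv1 hl.le)
      · exact (Real.continuous_rpow_const (by linarith)).continuousOn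
      · exact ((Real.continuous_rpow_const hp.le).comp
          (continuous_const.sub continuous_id)).continuousOn
    · intro u hu
      have hu0 : (0:ℝ) < u := hu.1
      have hu1 : (0:ℝ) < 1 - u := by linarith [hu.2]
      have hE : (0:ℝ) < 1 + l * u := by nlinarith
      have h1 : HasDerivAt (fun x : ℝ => x ^ (1-α/2)) ((1-α/2) * u ^ (1-α/2-1)) u :=
        Real.hasDerivAt_rpow_const (Or.inl hu0.ne')
      have hi : HasDerivAt (fun x : ℝ => 1 - x) (-1) u := by
        simpa using (hasDerivAt_id u).const_sub 1
      have h2 : HasDerivAt (fun x : ℝ => (1-x) ^ p) (-1 * p * (1-u) ^ (p-1)) u :=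
        hi.rpow_const (Or.inl hu1.ne')
      have h3i : HasDerivAt (fun x : ℝ => 1 + l * x) l u := by
        simpa using ((hasDerivAt_id u).const_mul l).const_add 1
      have h3 : HasDerivAt (fun x : ℝ => (1+l*x)⁻¹) (-l / (1+l*u)^2) u :=
        h3i.inv hE.ne'
      refine HasDerivAt.congr_deriv ((h1.mul h2).mul h3) ?_
      simp only [Pi.mul_apply]
      rw [show (1-α/2-1:ℝ) = -(α/2) by ring,
        show (1-α/2:ℝ) = 1 + (-(α/2)) by ring, Real.rpow_add hu0, Real.rpow_one]
      field_simp
      ring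
    · exact (i1.sub i2).sub i3
  have h10 : ((1:ℝ)-1) ^ p = 0 := by
    rw [show ((1:ℝ)-1) = 0 by ring, Real.zero_rpow hp.ne']
  have h00 : ((0:ℝ)) ^ (1-α/2) = 0 := Real.zero_rpow ha1.ne'
  simp only [h10, h00, mul_zero, zero_mul, sub_zero] at key
  rw [intervalIntegral.integral_sub (i1.sub i2) i3,
    intervalIntegral.integral_sub i1 i2,
    intervalIntegral.integral_const_mul, intervalIntegral.integral_const_mul,
    intervalIntegral.integral_const_mul] at key
  have : (1-α/2) * Jf α p l - p * Jbf α p l - l * Jdf α p l = 0 := key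
  linarith

lemma Jderiv (hα : α ∈ Ioo (0:ℝ) 2) (hp : 0 < p) {l : ℝ} (hl : 0 < l) :
    HasDerivAt (Jf α p) (-(Jdf α p l)) l := by
  have hmain := (intervalIntegral.hasDerivAt_integral_of_dominated_loc_of_deriv_le
    (F := fun (x : ℝ) (u : ℝ) => u ^ (-(α/2)) * (1-u) ^ p / (1+x*u))
    (F' := fun (x : ℝ) (u : ℝ) => -(u ^ (-(α/2)) * (1-u) ^ p * u / (1+x*u)^2))
    (x₀ := l) (s := Metric.ball l (l/2)) (a := 0) (b := 1)
    (bound := fun u => u ^ (-(α/2)))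
    (Metric.ball_mem_nhds l (by linarith))
    (Filter.Eventually.of_forall fun x => Measurable.aestronglyMeasurable (by fun_prop))
    (Jint hα hp hl.le)
    (Measurable.aestronglyMeasurable (by fun_prop))
    ?hbound
    (intervalIntegral.intervalIntegrable_rpow' (by nlinarith [hα.1, hα.2]))
    ?hdiff).2
  case hbound =>
    apply Filter.Eventually.of_forall
    intro u hu x hx
    rw [Set.uIoc_of_le (by norm_num : (0:ℝ) ≤ 1)] at hu
    have hx0 : 0 < x := by
      have := abs_lt.mp (by simpa [Real.dist_eq] using hx)
      linarith [this.1]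
    have hA : (0:ℝ) ≤ u ^ (-(α/2)) := Real.rpow_nonneg hu.1.le _
    have hB0 : (0:ℝ) ≤ (1-u) ^ p := Real.rpow_nonneg (by linarith [hu.2]) _
    have hB1 : (1-u) ^ p ≤ 1 :=
      Real.rpow_le_one (by linarith [hu.2]) (by linarith [hu.1]) hp.le
    have hE : (1:ℝ) ≤ (1+x*u)^2 := by nlinarith [mul_pos hx0 hu.1, sq_nonneg (x*u)]
    have hE0 : (0:ℝ) < (1+x*u)^2 := by nlinarith
    rw [norm_neg, Real.norm_eq_abs,
      abs_of_nonneg (div_nonneg (mul_nonneg (mul_nonneg hA hB0) hu.1.le) hE0.le),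
      div_le_iff₀ hE0]
    nlinarith [hu.1, hu.2, mul_nonneg hA hB0]
  case hdiff =>
    apply Filter.Eventually.of_forall
    intro u hu x hx
    rw [Set.uIoc_of_le (by norm_num : (0:ℝ) ≤ 1)] at hu
    have hx0 : 0 < x := by
      have := abs_lt.mp (by simpa [Real.dist_eq] using hx)
      linarith [this.1]
    have hE : (0:ℝ) < 1 + x*u := by nlinarith [hu.1]
    have hxi : HasDerivAt (fun x : ℝ => 1 + x*u) u x := by
      simpa using ((hasDerivAt_id x).mul_const u).const_add 1
    have h3 : HasDerivAt (fun x : ℝ => (1+x*u)⁻¹) (-u/(1+x*u)^2) x := hxi.inv hE.ne'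
    have h4 := h3.const_mul (u ^ (-(α/2)) * (1-u) ^ p)
    have heq : (fun y : ℝ => u ^ (-(α/2)) * (1-u) ^ p / (1+y*u))
        = fun y : ℝ => u ^ (-(α/2)) * (1-u) ^ p * (1+y*u)⁻¹ := by
      funext y; ring
    have hval : -(u ^ (-(α/2)) * (1-u) ^ p * u / (1+x*u)^2)
        = u ^ (-(α/2)) * (1-u) ^ p * (-u/(1+x*u)^2) := by ring
    show HasDerivAt (fun y : ℝ => u ^ (-(α/2)) * (1-u) ^ p / (1+y*u))
      (-(u ^ (-(α/2)) * (1-u) ^ p * u / (1+x*u)^2)) x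
    rw [heq, hval]
    exact h4
  have hval : (∫ u in (0:ℝ)..1, -(u ^ (-(α/2)) * (1-u) ^ p * u / (1+l*u)^2))
      = -(Jdf α p l) := by
    rw [intervalIntegral.integral_neg, Jdf]
    congr 1
    apply intervalIntegral.integral_congr
    intro u hu
    rw [Set.uIcc_of_le (by norm_num : (0:ℝ) ≤ 1)] at hu
    rcases eq_or_lt_of_le hu.1 with h0 | h0
    · simp [← h0, Real.zero_rpow (by nlinarith [hα.2] : (1-α/2 : ℝ) ≠ 0)]
    · show u ^ (-(α/2)) * (1-u) ^ p * u / (1+l*u)^2 = u ^ (1-α/2) * (1-u) ^ p / (1+l*u)^2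
      rw [show (1-α/2:ℝ) = -(α/2) + 1 by ring, Real.rpow_add h0, Real.rpow_one]
      ring
  rw [hval] at hmain
  exact hmain

noncomputable def Gf (a q : ℝ) (l : ℝ) : ℝ := l ^ (q+1-a/2) * (1+l) ^ (-q) * Jf a q l

lemma Gderiv (hα : α ∈ Ioo (0:ℝ) 2) (hp : 0 < p) {l : ℝ} (hl : 0 < l) :
    HasDerivAt (Gf α p)
      (l ^ (p-α/2) * (1+l) ^ (-p-1) * (p * Jf α p l + p * (1+l) * Jbf α p l)) l ∧
    0 < l ^ (p-α/2) * (1+l) ^ (-p-1) * (p * Jf α p l + p * (1+l) * Jbf α p l) := by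
  have h1l : (0:ℝ) < 1 + l := by linarith
  refine ⟨?_, ?_⟩
  · have hGf : Gf α p = fun y : ℝ => y ^ (p+1-α/2) * (1+y) ^ (-p) * Jf α p y := rfl
    rw [hGf]
    have hA : HasDerivAt (fun x : ℝ => x ^ (p+1-α/2)) ((p+1-α/2) * l ^ (p+1-α/2-1)) l :=
      Real.hasDerivAt_rpow_const (Or.inl hl.ne')
    have hBi : HasDerivAt (fun x : ℝ => 1 + x) 1 l := by
      simpa using (hasDerivAt_id l).const_add 1
    have hB : HasDerivAt (fun x : ℝ => (1+x) ^ (-p)) (1 * (-p) * (1+l) ^ (-p-1)) l :=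
      hBi.rpow_const (Or.inl h1l.ne')
    have hD := (hA.mul hB).mul (Jderiv hα hp hl)
    have e1 : l ^ (p+1-α/2) = l ^ (p-α/2) * l := by
      rw [← Real.rpow_add_one hl.ne' (p-α/2), show (p-α/2+1:ℝ) = p+1-α/2 by ring]
    have e3 : (1+l) ^ (-p) = (1+l) ^ (-p-1) * (1+l) := by
      rw [← Real.rpow_add_one h1l.ne' (-p-1), show (-p-1+1:ℝ) = -p by ring]
    have hIBP := IBP hα hp hl
    refine HasDerivAt.congr_deriv hD ?_
    simp only [Pi.mul_apply]
    rw [show (p+1-α/2-1:ℝ) = p-α/2 by ring, e1, e3]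
    linear_combination (l ^ (p-α/2) * ((1+l) ^ (-p-1)) * (1+l)) * hIBP
  · have hX : (0:ℝ) < l ^ (p-α/2) := Real.rpow_pos_of_pos hl _
    have hY : (0:ℝ) < (1+l) ^ (-p-1) := Real.rpow_pos_of_pos h1l _
    have hJ := Jpos hα hp hl.le
    have hJb := Jbnonneg hα hp hl.le
    have hs : (0:ℝ) < p * Jf α p l + p * (1+l) * Jbf α p l := by
      nlinarith [mul_pos hp hJ, mul_nonneg (mul_nonneg hp.le h1l.le) hJb]
    positivity

end aux

/-- For H(s,t) = s^{-(n-α)/2}(1 - B·I(s,t)), with the Green's function nonnegativity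
B·I ≤ 1, one has ∂H/∂s < 0 and ∂H/∂t > 0 for all s,t > 0. -/
theorem stmt4 (n : ℕ) (hn : 3 ≤ n) (α B : ℝ) (hα : α ∈ Set.Ioo (0 : ℝ) 2) (hB : 0 < B)
    (I H : ℝ → ℝ → ℝ)
    (hI : ∀ s t : ℝ, 0 < s → 0 < t →
      I s t = (s + t) ^ (-(((n : ℝ) - 2) / 2)) *
        ∫ b in (0 : ℝ)..(s / t), (s - t * b) ^ (((n : ℝ) - 2) / 2) / (b ^ (α / 2) * (1 + b)))
    (hH : ∀ s t : ℝ, 0 < s → 0 < t →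
      H s t = s ^ (-(((n : ℝ) - α) / 2)) * (1 - B * I s t))
    (hpos : ∀ s t : ℝ, 0 < s → 0 < t → B * I s t ≤ 1) :
    ∀ s t : ℝ, 0 < s → 0 < t →
      (∃ d : ℝ, HasDerivAt (fun s' => H s' t) d s ∧ d < 0) ∧
      (∃ d : ℝ, HasDerivAt (fun t' => H s t') d t ∧ 0 < d) := by
  have hn3 : (3:ℝ) ≤ (n:ℝ) := by exact_mod_cast hn
  set p : ℝ := ((n:ℝ)-2)/2 with hpdef
  set q : ℝ := ((n:ℝ)-α)/2 with hqdef
  have hp : 0 < p := by rw [hpdef]; linarith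
  have hq : q = p+1-α/2 := by rw [hpdef, hqdef]; ring
  have hq0 : 0 < q := by rw [hqdef]; nlinarith [hα.2]
  -- I equals Gf of the ratio
  have hIG : ∀ s t : ℝ, 0 < s → 0 < t → I s t = Gf α p (s/t) := by
    intro s t hs ht
    have hl : 0 < s/t := div_pos hs ht
    have hsub := intervalIntegral.smul_integral_comp_mul_left
      (f := fun b => (s - t*b) ^ p / (b ^ (α/2) * (1+b))) (s/t) (a := 0) (b := 1)
    simp only [mul_zero, mul_one] at hsub
    have hcongr : Set.EqOn (fun u : ℝ => (s - t*((s/t)*u)) ^ p / (((s/t)*u) ^ (α/2) * (1+(s/t)*u)))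
        (fun u : ℝ => ((t*(s/t)) ^ p * (s/t) ^ (-(α/2))) *
          (u ^ (-(α/2)) * (1-u) ^ p / (1+(s/t)*u))) (Set.uIcc 0 1) := by
      intro u hu
      rw [Set.uIcc_of_le (by norm_num : (0:ℝ) ≤ 1)] at hu
      have h1 : s - t*((s/t)*u) = (t*(s/t))*(1-u) := by
        field_simp
      show (s - t*((s/t)*u)) ^ p / (((s/t)*u) ^ (α/2) * (1+(s/t)*u))
        = (t*(s/t)) ^ p * (s/t) ^ (-(α/2)) * (u ^ (-(α/2)) * (1-u) ^ p / (1+(s/t)*u))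
      rw [h1, Real.mul_rpow (by positivity) (by linarith [hu.2]),
        Real.mul_rpow hl.le hu.1, Real.rpow_neg hl.le, Real.rpow_neg hu.1]
      rw [div_eq_mul_inv, div_eq_mul_inv, mul_inv, mul_inv]
      ring
    rw [hI s t hs ht, ← hsub, intervalIntegral.integral_congr hcongr,
      intervalIntegral.integral_const_mul]
    show (s+t) ^ (-p) * ((s/t) • ((t*(s/t)) ^ p * (s/t) ^ (-(α/2)) * Jf α p (s/t))) = _
    have hst : s + t = t * (1 + s/t) := by field_simp; ring
    have h1l : (0:ℝ) < 1 + s/t := by linarith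
    rw [smul_eq_mul, hst, Real.mul_rpow ht.le h1l.le, Real.mul_rpow ht.le hl.le,
      Real.rpow_neg ht.le p]
    have htp : (0:ℝ) < t ^ p := Real.rpow_pos_of_pos ht p
    have hll : (s/t) ^ (p+1-α/2) = (s/t) * ((s/t) ^ p * (s/t) ^ (-(α/2))) := by
      rw [show (p+1-α/2:ℝ) = 1+(p+ -(α/2)) by ring, Real.rpow_add hl, Real.rpow_add hl,
        Real.rpow_one]
    show _ = (s/t) ^ (p+1-α/2) * (1+s/t) ^ (-p) * Jf α p (s/t)
    rw [hll]
    field_simp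
  intro s t hs ht
  have hl : 0 < s/t := div_pos hs ht
  obtain ⟨hGd, hDpos⟩ := Gderiv hα hp hl
  set D : ℝ := (s/t) ^ (p-α/2) * (1+s/t) ^ (-p-1) *
    (p * Jf α p (s/t) + p * (1+s/t) * Jbf α p (s/t)) with hDdef
  have hG1 : 0 ≤ 1 - B * Gf α p (s/t) := by
    have := hpos s t hs ht
    rw [hIG s t hs ht] at this
    linarith
  have hsq : (0:ℝ) < s ^ (-q) := Real.rpow_pos_of_pos hs _
  have hsq1 : (0:ℝ) < s ^ (-q-1) := Real.rpow_pos_of_pos hs _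
  constructor
  · -- s-derivative
    have hdiv : HasDerivAt (fun s' : ℝ => s'/t) (1/t) s := (hasDerivAt_id s).div_const t
    have hcomp : HasDerivAt (fun s' => Gf α p (s'/t)) (D * (1/t)) s := by
      exact hGd.comp s hdiv
    have hfull := (Real.hasDerivAt_rpow_const (p := -q) (Or.inl hs.ne')).mul
      ((hcomp.const_mul B).const_sub 1)
    have hev : (fun s' => H s' t) =ᶠ[nhds s]
        (fun s' => s' ^ (-q) * (1 - B * Gf α p (s'/t))) := by
      filter_upwards [Ioi_mem_nhds hs] with s' hs'
      rw [hH s' t hs' ht, hIG s' t hs' ht]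
    refine ⟨_, hfull.congr_of_eventuallyEq hev, ?_⟩
    have ht1 : (0:ℝ) < 1/t := by positivity
    nlinarith [mul_pos (mul_pos hsq hB) (mul_pos hDpos ht1),
      mul_nonneg (mul_nonneg hq0.le hsq1.le) hG1]
  · -- t-derivative
    have hinv : HasDerivAt (fun t' : ℝ => s / t') (-(s/t^2)) t := by
      have h0 := (hasDerivAt_inv ht.ne').const_mul s
      have heq : (fun t' : ℝ => s / t') = fun t' : ℝ => s * t'⁻¹ := by
        funext y; ring
      rw [heq, show (-(s/t^2) : ℝ) = s * (-(t^2)⁻¹) by ring]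
      exact h0
    have hcomp : HasDerivAt (fun t' => Gf α p (s/t')) (D * (-(s/t^2))) t := by
      exact hGd.comp t hinv
    have hfull := ((hcomp.const_mul B).const_sub 1).const_mul (s ^ (-q))
    have hev : (fun t' => H s t') =ᶠ[nhds t]
        (fun t' => s ^ (-q) * (1 - B * Gf α p (s/t'))) := by
      filter_upwards [Ioi_mem_nhds ht] with t' ht'
      rw [hH s t' hs ht', hIG s t' hs ht']
    refine ⟨_, hfull.congr_of_eventuallyEq hev, ?_⟩
    have key : (0:ℝ) < s ^ (-q) * B * D * (s/t^2) :=
      mul_pos (mul_pos (mul_pos hsq hB) hDpos) (div_pos hs (pow_pos ht 2))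
    nlinarith [key]
end

section
/- Let n ≥ 3, 0 < α < 2, B > 0 and define H(s,t) = s^{-(n-α)/2}(1 - B·I(s,t)) with I(s,t) as above. After the change of variables b = sλ, one has ∂H/∂t (s,t) = (n-2)B / (2(t+s)^{n/2}) · ∫₀^{1/t} (1 - tλ)^{(n-4)/2} λ^{-α/2} dλ, and consequently the mixed partial ∂²H/∂t∂s (s,t) < 0 for all s, t > 0. -/
open Set intervalIntegral MeasureTheory

lemma aux_II {p q T : ℝ} (hp : -1 < p) (hq : -1 < q) (hT : 0 < T) {c : ℝ → ℝ}
    (hc : ContinuousOn c (Icc 0 T)) :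
    IntervalIntegrable (fun u => (T - u) ^ p * u ^ q * c u) volume 0 T := by
  have h2 : (0:ℝ) < T / 2 := by linarith
  have hshape : (fun u : ℝ => (T - u) ^ p * u ^ q * c u)
      = fun u => u ^ q * ((T - u) ^ p * c u) := by
    funext u; ring
  have piece1 : IntervalIntegrable (fun u : ℝ => (T - u) ^ p * u ^ q * c u) volume 0 (T/2) := by
    rw [hshape]
    have hi : IntervalIntegrable (fun u : ℝ => u ^ q) volume 0 (T/2) :=
      intervalIntegral.intervalIntegrable_rpow' hq
    refine hi.mul_continuousOn ?_
    rw [uIcc_of_le h2.le]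
    refine ContinuousOn.mul ?_ (hc.mono ?_)
    · refine (continuousOn_const.sub continuousOn_id).rpow_const fun x hx => Or.inl ?_
      have : x ≤ T/2 := hx.2
      have : (0:ℝ) < T - x := by linarith
      exact this.ne'
    · exact Icc_subset_Icc le_rfl (by linarith)
  have piece2 : IntervalIntegrable (fun u : ℝ => (T - u) ^ p * u ^ q * c u) volume (T/2) T := by
    have hshape2 : (fun u : ℝ => (T - u) ^ p * u ^ q * c u)
        = fun u => (T - u) ^ p * (u ^ q * c u) := by
      funext u; ring
    rw [hshape2]
    have hi0 : IntervalIntegrable (fun x : ℝ => x ^ p) volume 0 (T/2) :=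
      intervalIntegral.intervalIntegrable_rpow' hp
    have hi := hi0.comp_sub_left T
    rw [sub_zero, show T - T/2 = T/2 by ring] at hi
    refine hi.symm.mul_continuousOn ?_
    rw [uIcc_of_le (by linarith : T/2 ≤ T)]
    refine ContinuousOn.mul ?_ (hc.mono ?_)
    · refine continuousOn_id.rpow_const fun x hx => Or.inl ?_
      have : T/2 ≤ x := hx.1
      have hx0 : (0:ℝ) < x := lt_of_lt_of_le h2 this
      exact hx0.ne'
    · exact Icc_subset_Icc (by linarith) le_rfl
  exact piece1.trans piece2

set_option maxHeartbeats 2000000 in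

/-- After the change of variables b = sλ, the t-derivative of
H(s,t) = s^{-(n-α)/2}(1 - B·I(s,t)) is
(n-2)B/(2(t+s)^{n/2}) ∫₀^{1/t} (1-tλ)^{(n-4)/2} λ^{-α/2} dλ,
and the mixed partial ∂²H/∂t∂s is negative. -/
theorem stmt5 (n : ℕ) (hn : 3 ≤ n) (α B : ℝ) (hα : α ∈ Set.Ioo (0 : ℝ) 2) (hB : 0 < B)
    (I H : ℝ → ℝ → ℝ)
    (hI : ∀ s t : ℝ, 0 < s → 0 < t →
      I s t = (s + t) ^ (-(((n : ℝ) - 2) / 2)) *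
        ∫ b in (0 : ℝ)..(s / t), (s - t * b) ^ (((n : ℝ) - 2) / 2) / (b ^ (α / 2) * (1 + b)))
    (hH : ∀ s t : ℝ, 0 < s → 0 < t →
      H s t = s ^ (-(((n : ℝ) - α) / 2)) * (1 - B * I s t))
    (Ht : ℝ → ℝ → ℝ)
    (hHt : ∀ s t : ℝ, Ht s t = ((n : ℝ) - 2) * B / (2 * (t + s) ^ ((n : ℝ) / 2)) *
        ∫ l in (0 : ℝ)..(1 / t), (1 - t * l) ^ (((n : ℝ) - 4) / 2) * l ^ (-(α / 2)))
    (s t : ℝ) (hs : 0 < s) (ht : 0 < t) :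
    HasDerivAt (fun t' => H s t') (Ht s t) t ∧
    ∃ d : ℝ, HasDerivAt (fun s' => Ht s' t) d s ∧ d < 0 := by
  obtain ⟨hα0, hα2⟩ := hα
  have hn' : (3:ℝ) ≤ (n:ℝ) := by exact_mod_cast hn
  set p : ℝ := ((n : ℝ) - 2) / 2 with hpdef
  set a' : ℝ := α / 2 with hadef
  have hp2 : (1:ℝ)/2 ≤ p := by rw [hpdef]; linarith
  have hp0 : 0 < p := by linarith
  have hpm : (-1:ℝ) < p - 1 := by linarith
  have ha0 : 0 < a' := by rw [hadef]; linarith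
  have ha1 : a' < 1 := by rw [hadef]; linarith
  have hna : (-1:ℝ) < -a' := by linarith
  have h1a : (0:ℝ) < 1 - a' := by linarith
  have hna1 : (-1:ℝ) < 1 - a' := by linarith
  have hst : 0 < s + t := by linarith
  have hts : 0 < t + s := by linarith
  -- continuity of the denominators
  have hdenpos : ∀ x : ℝ, 0 ≤ x → (0:ℝ) < t + s * x := by
    intro x hx
    have := mul_nonneg hs.le hx
    linarith
  have hcden : ContinuousOn (fun u : ℝ => (t + s * u)⁻¹) (Icc 0 1) := by
    refine ContinuousOn.inv₀ (continuousOn_const.add (continuousOn_const.mul continuousOn_id))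
      fun x hx => (hdenpos x hx.1).ne'
  have hcden2 : ContinuousOn (fun u : ℝ => ((t + s * u) ^ 2)⁻¹) (Icc 0 1) := by
    refine ContinuousOn.inv₀
      ((continuousOn_const.add (continuousOn_const.mul continuousOn_id)).pow 2)
      fun x hx => (pow_pos (hdenpos x hx.1) 2).ne'
  -- integrability facts
  have iP : IntervalIntegrable (fun u : ℝ => (1-u)^p * u^(-a') / (t + s*u)) volume 0 1 := by
    have h := aux_II (by linarith : (-1:ℝ) < p) hna one_pos hcden
    have hsh : (fun u : ℝ => (1-u)^p * u^(-a') / (t + s*u))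
        = fun u : ℝ => (1-u)^p * u^(-a') * (fun u : ℝ => (t + s*u)⁻¹) u := by
      funext u; simp only; ring
    rw [hsh]; exact h
  have iQ : IntervalIntegrable (fun u : ℝ => (1-u)^p * u^(-a') / ((t + s*u)^2)) volume 0 1 := by
    have h := aux_II (by linarith : (-1:ℝ) < p) hna one_pos hcden2
    have hsh : (fun u : ℝ => (1-u)^p * u^(-a') / ((t + s*u)^2))
        = fun u : ℝ => (1-u)^p * u^(-a') * (fun u : ℝ => ((t + s*u)^2)⁻¹) u := by
      funext u; simp only; ring
    rw [hsh]; exact h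
  have iT : IntervalIntegrable (fun u : ℝ => (1-u)^(p-1) * u^(1-a') / (t + s*u)) volume 0 1 := by
    have h := aux_II hpm hna1 one_pos hcden
    have hsh : (fun u : ℝ => (1-u)^(p-1) * u^(1-a') / (t + s*u))
        = fun u : ℝ => (1-u)^(p-1) * u^(1-a') * (fun u : ℝ => (t + s*u)⁻¹) u := by
      funext u; simp only; ring
    rw [hsh]; exact h
  have iU : IntervalIntegrable (fun u : ℝ => (1-u)^p * u^(1-a') / ((t + s*u)^2)) volume 0 1 := by
    have h := aux_II (by linarith : (-1:ℝ) < p) hna1 one_pos hcden2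
    have hsh : (fun u : ℝ => (1-u)^p * u^(1-a') / ((t + s*u)^2))
        = fun u : ℝ => (1-u)^p * u^(1-a') * (fun u : ℝ => ((t + s*u)^2)⁻¹) u := by
      funext u; simp only; ring
    rw [hsh]; exact h
  have iR : IntervalIntegrable (fun u : ℝ => (1-u)^(p-1) * u^(-a')) volume 0 1 := by
    have h := aux_II hpm hna one_pos (continuousOn_const (c := (1:ℝ)))
    have hsh : (fun u : ℝ => (1-u)^(p-1) * u^(-a'))
        = fun u : ℝ => (1-u)^(p-1) * u^(-a') * (fun _ : ℝ => (1:ℝ)) u := by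
      funext u; simp only; ring
    rw [hsh]; exact h
  -- derivative of P(τ) = ∫₀¹ (1-u)^p u^{-a'} /(τ+su) du
  have hball : ∀ x ∈ Metric.ball t (t/2), t/2 < x := by
    intro x hx
    rw [Metric.mem_ball, Real.dist_eq, abs_lt] at hx
    linarith [hx.1]
  have hGderiv : HasDerivAt (fun τ : ℝ => ∫ u in (0:ℝ)..1, (1-u)^p * u^(-a') / (τ + s*u))
      (-(∫ u in (0:ℝ)..1, (1-u)^p * u^(-a') / ((t + s*u)^2))) t := by
    have main := intervalIntegral.hasDerivAt_integral_of_dominated_loc_of_deriv_le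
      (F := fun x u => (1-u)^p * u^(-a') / (x + s*u))
      (F' := fun x u => -((1-u)^p * u^(-a') / ((x + s*u)^2)))
      (x₀ := t) (a := (0:ℝ)) (b := 1) (μ := volume)
      (bound := fun u => (1-u)^p * u^(-a') / (t^2/4))
      (Metric.ball_mem_nhds t (half_pos ht)) ?_ ?_ ?_ ?_ ?_ ?_
    · have h2 := main.2
      rw [intervalIntegral.integral_neg] at h2
      exact h2
    · -- measurability of F x near t
      filter_upwards [Metric.ball_mem_nhds t (half_pos ht)] with x hx
      apply ContinuousOn.aestronglyMeasurable ?_ measurableSet_uIoc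
      rw [uIoc_of_le (zero_le_one (α := ℝ))]
      refine ContinuousOn.div (ContinuousOn.mul ?_ ?_)
        (continuousOn_const.add (continuousOn_const.mul continuousOn_id)) ?_
      · exact (continuousOn_const.sub continuousOn_id).rpow_const fun u hu => Or.inr hp0.le
      · exact continuousOn_id.rpow_const fun u hu => Or.inl (ne_of_gt hu.1)
      · intro u hu
        have h1 := hball x hx
        have h2 : 0 ≤ s * u := mul_nonneg hs.le hu.1.le
        have : (0:ℝ) < x + s * u := by linarith
        exact this.ne'
    · exact iP
    · -- measurability of F' t
      apply ContinuousOn.aestronglyMeasurable ?_ measurableSet_uIoc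
      rw [uIoc_of_le (zero_le_one (α := ℝ))]
      refine ContinuousOn.neg (ContinuousOn.div (ContinuousOn.mul ?_ ?_)
        ((continuousOn_const.add (continuousOn_const.mul continuousOn_id)).pow 2) ?_)
      · exact (continuousOn_const.sub continuousOn_id).rpow_const fun u hu => Or.inr hp0.le
      · exact continuousOn_id.rpow_const fun u hu => Or.inl (ne_of_gt hu.1)
      · intro u hu
        have h2 : 0 ≤ s * u := mul_nonneg hs.le hu.1.le
        have : (0:ℝ) < t + s * u := by linarith
        exact (pow_pos this 2).ne'
    · -- bound
      refine Filter.Eventually.of_forall ?_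
      intro u hu x hx
      rw [uIoc_of_le (zero_le_one (α := ℝ))] at hu
      have h1 := hball x hx
      have h2 : 0 ≤ s * u := mul_nonneg hs.le hu.1.le
      have hden : t/2 ≤ x + s * u := by linarith
      have hnum : 0 ≤ (1-u)^p * u^(-a') :=
        mul_nonneg (Real.rpow_nonneg (by linarith [hu.2]) _) (Real.rpow_nonneg hu.1.le _)
      have hx2 : t^2/4 ≤ (x + s*u)^2 := by nlinarith
      rw [Real.norm_eq_abs, abs_neg, abs_of_nonneg (div_nonneg hnum (sq_nonneg _))]
      exact div_le_div_of_nonneg_left hnum (by positivity) hx2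
    · -- bound integrable
      have h := aux_II (by linarith : (-1:ℝ) < p) hna one_pos
        (continuousOn_const (c := ((t^2/4)⁻¹ : ℝ)))
      have hsh : (fun u : ℝ => (1-u)^p * u^(-a') / (t^2/4))
          = fun u : ℝ => (1-u)^p * u^(-a') * (fun _ : ℝ => ((t^2/4)⁻¹ : ℝ)) u := by
        funext u; simp only; ring
      rw [hsh]; exact h
    · -- differentiability in x
      refine Filter.Eventually.of_forall ?_
      intro u hu x hx
      rw [uIoc_of_le (zero_le_one (α := ℝ))] at hu
      have h1 := hball x hx
      have h2 : 0 ≤ s * u := mul_nonneg hs.le hu.1.le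
      have hden : (0:ℝ) < x + s * u := by linarith
      have d0 : HasDerivAt (fun x : ℝ => x + s*u) 1 x := (hasDerivAt_id x).add_const (s*u)
      have d1 := (d0.inv hden.ne').const_mul ((1-u)^p * u^(-a'))
      have : HasDerivAt (fun x : ℝ => (1-u)^p * u^(-a') * (x + s*u)⁻¹)
          (-((1-u)^p * u^(-a') / ((x + s*u)^2))) x := by
        refine d1.congr_deriv ?_
        ring
      simpa [div_eq_mul_inv] using this
  -- Step A: formula for H on the positive axis
  have hA : ∀ t' : ℝ, 0 < t' → H s t' = s ^ (-(((n:ℝ) - α) / 2))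
      - B * ((s + t') ^ (-p) * (t' ^ a' * ∫ u in (0:ℝ)..1, (1-u)^p * u^(-a') / (t' + s*u))) := by
    intro t' ht'
    rw [hH s t' hs ht', hI s t' hs ht']
    have hc0 : (0:ℝ) < s / t' := div_pos hs ht'
    have hsub := intervalIntegral.smul_integral_comp_mul_left (a := (0:ℝ)) (b := 1)
      (fun b => (s - t' * b) ^ p / (b ^ a' * (1 + b))) (s / t')
    rw [mul_zero, mul_one] at hsub
    rw [← hsub, smul_eq_mul]
    have hcong : (∫ u in (0:ℝ)..1, (s - t' * (s / t' * u)) ^ p / ((s / t' * u) ^ a' * (1 + s / t' * u)))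
        = ∫ u in (0:ℝ)..1, (s^p * ((t'/s)^a' * t')) * ((1-u)^p * u^(-a') / (t' + s*u)) := by
      apply intervalIntegral.integral_congr
      intro u hu
      rw [uIcc_of_le (zero_le_one (α := ℝ))] at hu
      obtain ⟨hu0, hu1⟩ := hu
      rcases eq_or_lt_of_le hu0 with h0 | h0
      · rw [← h0]
        simp [Real.zero_rpow ha0.ne', Real.zero_rpow (neg_ne_zero.mpr ha0.ne')]
      rcases eq_or_lt_of_le hu1 with h1 | h1
      · simp only []
        rw [h1, show s - t' * (s / t' * 1) = 0 by field_simp; ring]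
        simp [Real.zero_rpow hp0.ne']
      · have h1u : (0:ℝ) < 1 - u := by linarith
        have e1 : s - t' * (s / t' * u) = s * (1 - u) := by field_simp
        have e2 : (s * (1-u)) ^ p = s^p * (1-u)^p := Real.mul_rpow hs.le h1u.le
        have e3 : (s / t' * u) ^ a' = (s/t')^a' * u^a' := Real.mul_rpow hc0.le h0.le
        have e4 : (s/t')^a' = s^a' / t'^a' := Real.div_rpow hs.le ht'.le a'
        have e5 : (t'/s)^a' = t'^a' / s^a' := Real.div_rpow ht'.le hs.le a'
        have e6 : u^(-a') = (u^a')⁻¹ := Real.rpow_neg h0.le a'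
        simp only []
        rw [e1, e2, e3, e4, e5, e6]
        have n1 : u^a' ≠ 0 := (Real.rpow_pos_of_pos h0 _).ne'
        have n2 : t'^a' ≠ 0 := (Real.rpow_pos_of_pos ht' _).ne'
        have n3 : s^a' ≠ 0 := (Real.rpow_pos_of_pos hs _).ne'
        have n4 : (0:ℝ) < t' + s * u := by nlinarith
        have n5 : (0:ℝ) < 1 + s / t' * u := by positivity
        field_simp
    rw [hcong, intervalIntegral.integral_const_mul]
    have hcollect : s ^ (-(((n:ℝ) - α) / 2)) * (s / t' * (s^p * ((t'/s)^a' * t'))) = t' ^ a' := by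
      have key : s ^ (-(((n:ℝ) - α) / 2)) * (s * s^p) = s ^ a' := by
        have h1 : s * s^p = s^(1+p) := by rw [Real.rpow_add hs, Real.rpow_one]
        rw [h1, ← Real.rpow_add hs]
        congr 1
        rw [hpdef, hadef]; ring
      rw [Real.div_rpow ht'.le hs.le]
      have n3 : s^a' ≠ 0 := (Real.rpow_pos_of_pos hs _).ne'
      have hre : s ^ (-(((n:ℝ) - α) / 2)) * (s / t' * (s^p * (t'^a' / s^a' * t')))
          = (s ^ (-(((n:ℝ) - α) / 2)) * (s * s^p)) * (t'^a' / s^a') * (t' / t') := by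
        ring
      rw [hre, key, div_self ht'.ne', mul_one]
      field_simp
    linear_combination (-(B * ((s + t') ^ (-p) *
      (∫ u in (0:ℝ)..1, (1-u)^p * u^(-a') / (t' + s*u))))) * hcollect
  -- rewrite of the L-integral via l = u/t
  have hL : (∫ l in (0:ℝ)..(1/t), (1 - t*l)^(p-1) * l^(-a'))
      = t^(a'-1) * ∫ u in (0:ℝ)..1, (1-u)^(p-1) * u^(-a') := by
    have h1 : (∫ l in (0:ℝ)..(1/t), (1 - t*l)^(p-1) * l^(-a'))
        = ∫ l in (0:ℝ)..(1/t), (fun u : ℝ => (1-u)^(p-1) * (u/t)^(-a')) (t*l) := by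
      apply intervalIntegral.integral_congr
      intro l hl
      simp only []
      rw [mul_comm t l, mul_div_cancel_right₀ l ht.ne']
    have h2 := intervalIntegral.integral_comp_mul_left (a := (0:ℝ)) (b := 1/t)
      (fun u : ℝ => (1-u)^(p-1) * (u/t)^(-a')) ht.ne'
    rw [mul_zero, mul_one_div_cancel ht.ne'] at h2
    rw [h1, h2, smul_eq_mul]
    have h3 : (∫ u in (0:ℝ)..1, (1-u)^(p-1) * (u/t)^(-a'))
        = ∫ u in (0:ℝ)..1, ((1-u)^(p-1) * u^(-a')) * t^a' := by
      apply intervalIntegral.integral_congr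
      intro u hu
      rw [uIcc_of_le (zero_le_one (α := ℝ))] at hu
      simp only []
      rw [Real.div_rpow hu.1 ht.le, Real.rpow_neg ht.le, div_eq_mul_inv, inv_inv, mul_assoc]
    rw [h3, intervalIntegral.integral_mul_const]
    rw [show t^(a'-1) = t^a' / t from by rw [Real.rpow_sub ht, Real.rpow_one]]
    field_simp
  -- positivity of R
  have hRpos : 0 < ∫ u in (0:ℝ)..1, (1-u)^(p-1) * u^(-a') := by
    apply intervalIntegral_pos_of_pos_on iR ?_ one_pos
    intro x hx
    exact mul_pos (Real.rpow_pos_of_pos (by linarith [hx.2]) _) (Real.rpow_pos_of_pos hx.1 _)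
  -- identity 1 : R = t*P + (s+t)*T
  have hId1 : (∫ u in (0:ℝ)..1, (1-u)^(p-1) * u^(-a'))
      = t * (∫ u in (0:ℝ)..1, (1-u)^p * u^(-a') / (t + s*u))
        + (s+t) * ∫ u in (0:ℝ)..1, (1-u)^(p-1) * u^(1-a') / (t + s*u) := by
    have hcong : (∫ u in (0:ℝ)..1, (1-u)^(p-1) * u^(-a'))
        = ∫ u in (0:ℝ)..1, (t * ((1-u)^p * u^(-a') / (t + s*u))
            + (s+t) * ((1-u)^(p-1) * u^(1-a') / (t + s*u))) := by
      apply intervalIntegral.integral_congr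
      intro u hu
      rw [uIcc_of_le (zero_le_one (α := ℝ))] at hu
      obtain ⟨hu0, hu1⟩ := hu
      rcases eq_or_lt_of_le hu0 with h0 | h0
      · rw [← h0]
        simp [Real.zero_rpow (neg_ne_zero.mpr ha0.ne'), Real.zero_rpow h1a.ne']
      rcases eq_or_lt_of_le hu1 with h1 | h1
      · rw [h1]
        simp only [sub_self, Real.one_rpow, Real.zero_rpow hp0.ne']
        have hne : t + s * 1 ≠ 0 := (hdenpos 1 (by norm_num)).ne'
        field_simp
        ring
      · have h1u : (0:ℝ) < 1 - u := by linarith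
        have e1 := Real.rpow_add_one h1u.ne' (p-1)
        rw [show p - 1 + 1 = p by ring] at e1
        have e2 := Real.rpow_add_one h0.ne' (-a')
        rw [show -a' + 1 = 1 - a' by ring] at e2
        simp only []
        rw [e1, e2]
        have hne : (0:ℝ) < t + s * u := hdenpos u h0.le
        field_simp
        ring
    rw [hcong, intervalIntegral.integral_add (iP.const_mul t) (iT.const_mul (s+t)),
      intervalIntegral.integral_const_mul, intervalIntegral.integral_const_mul]
  -- identity 2 : t*Q - a'*P = p*T  (via FTC)
  have hId2 : t * (∫ u in (0:ℝ)..1, (1-u)^p * u^(-a') / ((t + s*u)^2))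
      - a' * (∫ u in (0:ℝ)..1, (1-u)^p * u^(-a') / (t + s*u))
      = p * ∫ u in (0:ℝ)..1, (1-u)^(p-1) * u^(1-a') / (t + s*u) := by
    have hcontf : ContinuousOn (fun v : ℝ => (1-v)^p * v^(1-a') / (t + s*v)) (Icc 0 1) := by
      refine ContinuousOn.div (ContinuousOn.mul ?_ ?_)
        (continuousOn_const.add (continuousOn_const.mul continuousOn_id))
        fun x hx => (hdenpos x hx.1).ne'
      · exact (continuousOn_const.sub continuousOn_id).rpow_const fun x hx => Or.inr hp0.le
      · exact continuousOn_id.rpow_const fun x hx => Or.inr h1a.le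
    have hfd : ∀ u ∈ Ioo (0:ℝ) 1, HasDerivAt (fun v : ℝ => (1-v)^p * v^(1-a') / (t + s*v))
        (-p * ((1-u)^(p-1) * u^(1-a') / (t + s*u)) + (1-a') * ((1-u)^p * u^(-a') / (t + s*u))
          - s * ((1-u)^p * u^(1-a') / ((t + s*u)^2))) u := by
      intro u hu
      obtain ⟨hu0, hu1⟩ := hu
      have h1u : (0:ℝ) < 1 - u := by linarith
      have hden : (0:ℝ) < t + s*u := hdenpos u hu0.le
      have d1 : HasDerivAt (fun v : ℝ => 1 - v) (-1) u := (hasDerivAt_id u).const_sub 1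
      have d2 : HasDerivAt (fun v : ℝ => (1-v)^p) (-1 * p * (1-u)^(p-1)) u :=
        d1.rpow_const (Or.inl h1u.ne')
      have d3 : HasDerivAt (fun v : ℝ => v^(1-a')) (1 * (1-a') * u^(1-a'-1)) u :=
        (hasDerivAt_id u).rpow_const (Or.inl hu0.ne')
      have d4 : HasDerivAt (fun v : ℝ => t + s*v) (s*1) u :=
        ((hasDerivAt_id u).const_mul s).const_add t
      have d5 := (d2.mul d3).div d4 hden.ne'
      refine d5.congr_deriv ?_
      simp only [Pi.mul_apply]
      rw [show (1:ℝ) - a' - 1 = -a' by ring]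
      have e1 := Real.rpow_add_one h1u.ne' (p-1)
      rw [show p - 1 + 1 = p by ring] at e1
      have e2 := Real.rpow_add_one hu0.ne' (-a')
      rw [show -a' + 1 = 1 - a' by ring] at e2
      rw [e1, e2]
      field_simp
    have hiF' : IntervalIntegrable (fun u : ℝ =>
        -p * ((1-u)^(p-1) * u^(1-a') / (t + s*u)) + (1-a') * ((1-u)^p * u^(-a') / (t + s*u))
          - s * ((1-u)^p * u^(1-a') / ((t + s*u)^2))) volume 0 1 :=
      ((iT.const_mul (-p)).add (iP.const_mul (1-a'))).sub (iU.const_mul s)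
    have hFTC := intervalIntegral.integral_eq_sub_of_hasDeriv_right_of_le zero_le_one hcontf
      (fun u hu => (hfd u hu).hasDerivWithinAt) hiF'
    have hFTC' : (∫ u in (0:ℝ)..1,
        (-p * ((1-u)^(p-1) * u^(1-a') / (t + s*u)) + (1-a') * ((1-u)^p * u^(-a') / (t + s*u))
          - s * ((1-u)^p * u^(1-a') / ((t + s*u)^2)))) = 0 := by
      rw [hFTC]
      norm_num [Real.zero_rpow hp0.ne', Real.zero_rpow h1a.ne']
    have hsplit : (∫ u in (0:ℝ)..1,
        (-p * ((1-u)^(p-1) * u^(1-a') / (t + s*u)) + (1-a') * ((1-u)^p * u^(-a') / (t + s*u))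
          - s * ((1-u)^p * u^(1-a') / ((t + s*u)^2))))
        = -p * (∫ u in (0:ℝ)..1, (1-u)^(p-1) * u^(1-a') / (t + s*u))
          + (1-a') * (∫ u in (0:ℝ)..1, (1-u)^p * u^(-a') / (t + s*u))
          - s * ∫ u in (0:ℝ)..1, (1-u)^p * u^(1-a') / ((t + s*u)^2) := by
      rw [intervalIntegral.integral_sub ((iT.const_mul (-p)).add (iP.const_mul (1-a')))
        (iU.const_mul s),
        intervalIntegral.integral_add (iT.const_mul (-p)) (iP.const_mul (1-a')),
        intervalIntegral.integral_const_mul, intervalIntegral.integral_const_mul,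
        intervalIntegral.integral_const_mul]
    have hsU : s * (∫ u in (0:ℝ)..1, (1-u)^p * u^(1-a') / ((t + s*u)^2))
        = (∫ u in (0:ℝ)..1, (1-u)^p * u^(-a') / (t + s*u))
          - t * ∫ u in (0:ℝ)..1, (1-u)^p * u^(-a') / ((t + s*u)^2) := by
      have hcong2 : (∫ u in (0:ℝ)..1, s * ((1-u)^p * u^(1-a') / ((t + s*u)^2)))
          = ∫ u in (0:ℝ)..1, ((1-u)^p * u^(-a') / (t + s*u)
              - t * ((1-u)^p * u^(-a') / ((t + s*u)^2))) := by
        apply intervalIntegral.integral_congr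
        intro u hu
        rw [uIcc_of_le (zero_le_one (α := ℝ))] at hu
        obtain ⟨hu0, hu1⟩ := hu
        rcases eq_or_lt_of_le hu0 with h0 | h0
        · rw [← h0]
          simp [Real.zero_rpow (neg_ne_zero.mpr ha0.ne'), Real.zero_rpow h1a.ne']
        rcases eq_or_lt_of_le hu1 with h1 | h1
        · rw [h1]
          simp [Real.zero_rpow hp0.ne']
        · have h1u : (0:ℝ) < 1 - u := by linarith
          have e2 := Real.rpow_add_one h0.ne' (-a')
          rw [show -a' + 1 = 1 - a' by ring] at e2
          simp only []
          rw [e2]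
          have hne : (0:ℝ) < t + s * u := hdenpos u h0.le
          field_simp
          ring
      rw [intervalIntegral.integral_const_mul] at hcong2
      rw [hcong2, intervalIntegral.integral_sub iP (iQ.const_mul t),
        intervalIntegral.integral_const_mul]
    linear_combination hFTC' - hsplit + hsU
  -- key algebraic identity
  have hKey : p * t * (∫ u in (0:ℝ)..1, (1-u)^p * u^(-a') / (t + s*u))
      - a' * (s+t) * (∫ u in (0:ℝ)..1, (1-u)^p * u^(-a') / (t + s*u))
      + (s+t) * (t * ∫ u in (0:ℝ)..1, (1-u)^p * u^(-a') / ((t + s*u)^2))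
      = p * ∫ u in (0:ℝ)..1, (1-u)^(p-1) * u^(-a') := by
    linear_combination (s+t) * hId2 + (-p) * hId1
  -- assemble the derivative in t
  have h3 : HasDerivAt (fun t' : ℝ => s + t') 1 t := (hasDerivAt_id t).const_add s
  have h4 : HasDerivAt (fun t' : ℝ => (s + t') ^ (-p)) (1 * -p * (s+t) ^ (-p - 1)) t :=
    h3.rpow_const (Or.inl hst.ne')
  have h5 : HasDerivAt (fun t' : ℝ => t' ^ a') (1 * a' * t ^ (a' - 1)) t :=
    (hasDerivAt_id t).rpow_const (Or.inl ht.ne')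
  have h6 := h5.mul hGderiv
  have h7 := h4.mul h6
  have h8 := (h7.const_mul B).const_sub (s ^ (-(((n:ℝ) - α) / 2)))
  have hEv : (fun t' => H s t') =ᶠ[nhds t] (fun t' => s ^ (-(((n:ℝ) - α) / 2))
      - B * ((s + t') ^ (-p) * (t' ^ a' * ∫ u in (0:ℝ)..1, (1-u)^p * u^(-a') / (t' + s*u)))) := by
    filter_upwards [IsOpen.mem_nhds isOpen_Ioi ht] with τ hτ
    exact hA τ hτ
  have final1 := h8.congr_of_eventuallyEq hEv
  -- identify the derivative value with Ht s t
  have hXne : ((s+t) : ℝ) ^ (-p - 1 : ℝ) ≠ 0 := (Real.rpow_pos_of_pos hst _).ne'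
  have hD : -(B * (1 * -p * (s+t) ^ (-p - 1) * (t ^ a' * ∫ u in (0:ℝ)..1, (1-u)^p * u^(-a') / (t + s*u))
        + (s + t) ^ (-p) * (1 * a' * t ^ (a' - 1) * (∫ u in (0:ℝ)..1, (1-u)^p * u^(-a') / (t + s*u))
          + t ^ a' * -(∫ u in (0:ℝ)..1, (1-u)^p * u^(-a') / ((t + s*u)^2)))))
      = Ht s t := by
    rw [hHt s t]
    simp only [show (((n:ℝ) - 4) / 2) = p - 1 from by rw [hpdef]; ring]
    rw [hL]
    rw [show ((n:ℝ) - 2) = 2 * p from by rw [hpdef]; ring,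
      show ((n:ℝ) / 2) = p + 1 from by rw [hpdef]; ring]
    rw [show ((t+s) : ℝ) ^ (p + 1 : ℝ) = (((s+t) : ℝ) ^ (-p - 1 : ℝ))⁻¹ from by
      rw [add_comm t s, show (-p - 1 : ℝ) = -(p+1) by ring, Real.rpow_neg hst.le, inv_inv]]
    rw [show ((s+t) : ℝ) ^ (-p : ℝ) = ((s+t) : ℝ) ^ (-p - 1 : ℝ) * (s+t) from by
      rw [← Real.rpow_add_one hst.ne' (-p - 1)]; congr 1; ring]
    rw [show (t : ℝ) ^ (a' : ℝ) = t ^ (a' - 1 : ℝ) * t from by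
      rw [← Real.rpow_add_one ht.ne' (a' - 1)]; congr 1; ring]
    rw [mul_comm 2 (((s+t) : ℝ) ^ (-p - 1 : ℝ))⁻¹, ← div_div, div_inv_eq_mul]
    linear_combination (B * ((s+t) ^ (-p - 1 : ℝ)) * (t ^ (a' - 1 : ℝ))) * hKey
  rw [← hD]
  refine ⟨final1, ?_⟩
  -- Part 2 : the s-derivative of Ht is negative
  have hLpos : 0 < ∫ l in (0:ℝ)..(1/t), (1 - t*l)^(p-1) * l^(-a') := by
    rw [hL]
    exact mul_pos (Real.rpow_pos_of_pos ht _) hRpos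
  have hfun : (fun s' => Ht s' t) = fun s' =>
      (2*p) * B / (2 * (t + s') ^ (p + 1 : ℝ)) * ∫ l in (0:ℝ)..(1/t), (1 - t*l)^(p-1) * l^(-a') := by
    funext s'
    rw [hHt s' t]
    simp only [show (((n:ℝ) - 4) / 2) = p - 1 from by rw [hpdef]; ring,
      show ((n:ℝ) - 2) = 2 * p from by rw [hpdef]; ring,
      show ((n:ℝ) / 2) = p + 1 from by rw [hpdef]; ring]
  set L : ℝ := ∫ l in (0:ℝ)..(1/t), (1 - t*l)^(p-1) * l^(-a') with hLdef
  have htspos : (0:ℝ) < (t+s) ^ (p + 1 : ℝ) := Real.rpow_pos_of_pos hts _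
  have dS : HasDerivAt (fun s' : ℝ => (t + s') ^ (p + 1 : ℝ)) (1 * (p+1) * (t+s) ^ (p + 1 - 1 : ℝ)) s :=
    ((hasDerivAt_id s).const_add t).rpow_const (Or.inl hts.ne')
  have dInv := dS.inv htspos.ne'
  have dAll := dInv.const_mul ((2*p) * B * L / 2)
  have hfun2 : (fun s' : ℝ => (2*p) * B / (2 * (t + s') ^ (p + 1 : ℝ)) * L)
      = fun s' : ℝ => (2*p) * B * L / 2 * ((t + s') ^ (p + 1 : ℝ))⁻¹ := by
    funext s'
    ring
  refine ⟨(2*p) * B * L / 2 * (-(1 * (p+1) * (t+s) ^ (p + 1 - 1 : ℝ)) / ((t+s) ^ (p + 1 : ℝ)) ^ 2), ?_, ?_⟩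
  · rw [hfun, hfun2]
    exact dAll
  · have hnum : (0:ℝ) < 1 * (p+1) * (t+s) ^ (p + 1 - 1 : ℝ) := by
      have := Real.rpow_pos_of_pos hts (p + 1 - 1 : ℝ)
      nlinarith
    have hpos1 : (0:ℝ) < (2*p) * B * L / 2 := by
      have : (0:ℝ) < L := hLpos
      positivity
    apply mul_neg_of_pos_of_neg hpos1
    apply div_neg_of_neg_of_pos
    · linarith
    · positivity
end

section
/- Regularity Lifting Lemma: Let V be a Hausdorff topological vector space with two extended norms ‖·‖_X, ‖·‖_Y : V → [0,∞] such that X = {v : ‖v‖_X < ∞} and Y = {v : ‖v‖_Y < ∞} are complete under the respective norms and convergence in X or in Y implies convergence in V. Let T : V → V be a map which is a contraction from X to X and from Y to Y. Suppose f ∈ X and there exists g ∈ X ∩ Y with f = Tf + g in X. Then f ∈ X ∩ Y. -/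
open Filter Topology

/-- Regularity Lifting Lemma: V a Hausdorff topological vector space with two extended
norms ‖·‖_X, ‖·‖_Y whose finiteness subspaces X, Y are complete, and convergence in
X or Y implies convergence in V. If T is a contraction from X to X and from Y to Y,
f ∈ X, g ∈ X ∩ Y, and f = Tf + g, then f ∈ X ∩ Y. -/
theorem stmt9 {V : Type*} [AddCommGroup V] [Module ℝ V] [TopologicalSpace V]
    [T2Space V] [IsTopologicalAddGroup V] [ContinuousSMul ℝ V]
    (NX NY : V → ENNReal)
    -- extended norm axioms
    (hNXadd : ∀ u v, NX (u + v) ≤ NX u + NX v)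
    (hNXneg : ∀ u, NX (-u) = NX u) (hNX0 : NX 0 = 0)
    (hNYadd : ∀ u v, NY (u + v) ≤ NY u + NY v)
    (hNYneg : ∀ u, NY (-u) = NY u) (hNY0 : NY 0 = 0)
    -- completeness of X and Y
    (complX : ∀ u : ℕ → V, (∀ k, NX (u k) ≠ ⊤) →
      (∀ ε : ENNReal, 0 < ε → ∃ N, ∀ j ≥ N, ∀ k ≥ N, NX (u j - u k) < ε) →
      ∃ v, NX v ≠ ⊤ ∧ Tendsto (fun k => NX (u k - v)) atTop (nhds 0))
    (complY : ∀ u : ℕ → V, (∀ k, NY (u k) ≠ ⊤) →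
      (∀ ε : ENNReal, 0 < ε → ∃ N, ∀ j ≥ N, ∀ k ≥ N, NY (u j - u k) < ε) →
      ∃ v, NY v ≠ ⊤ ∧ Tendsto (fun k => NY (u k - v)) atTop (nhds 0))
    -- convergence in X or Y implies convergence in V
    (convX : ∀ (u : ℕ → V) (v : V),
      Tendsto (fun k => NX (u k - v)) atTop (nhds 0) → Tendsto u atTop (nhds v))
    (convY : ∀ (u : ℕ → V) (v : V),
      Tendsto (fun k => NY (u k - v)) atTop (nhds 0) → Tendsto u atTop (nhds v))
    -- T a contraction from X to X and from Y to Y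
    (T : V → V) (θ : ENNReal) (hθ : θ < 1)
    (hTmapX : ∀ u, NX u ≠ ⊤ → NX (T u) ≠ ⊤)
    (hTmapY : ∀ u, NY u ≠ ⊤ → NY (T u) ≠ ⊤)
    (hTX : ∀ u v, NX u ≠ ⊤ → NX v ≠ ⊤ → NX (T u - T v) ≤ θ * NX (u - v))
    (hTY : ∀ u v, NY u ≠ ⊤ → NY v ≠ ⊤ → NY (T u - T v) ≤ θ * NY (u - v))
    (f g : V) (hf : NX f ≠ ⊤) (hgX : NX g ≠ ⊤) (hgY : NY g ≠ ⊤)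
    (hfg : f = T f + g) :
    NX f ≠ ⊤ ∧ NY f ≠ ⊤ := by
  refine ⟨hf, ?_⟩
  -- iteration sequence
  set u : ℕ → V := fun k => Nat.rec g (fun _ w => T w + g) k with hu
  have hu0 : u 0 = g := rfl
  have hustep : ∀ k, u (k + 1) = T (u k) + g := fun k => rfl
  have huX : ∀ k, NX (u k) ≠ ⊤ := by
    intro k; induction k with
    | zero => exact hgX
    | succ k ih =>
      rw [hustep]
      exact fun h => (lt_of_le_of_lt (hNXadd _ _)
        (lt_top_iff_ne_top.2 (ENNReal.add_ne_top.2 ⟨hTmapX _ ih, hgX⟩))).ne (h ▸ rfl)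
  have huY : ∀ k, NY (u k) ≠ ⊤ := by
    intro k; induction k with
    | zero => exact hgY
    | succ k ih =>
      rw [hustep]
      exact fun h => (lt_of_le_of_lt (hNYadd _ _)
        (lt_top_iff_ne_top.2 (ENNReal.add_ne_top.2 ⟨hTmapY _ ih, hgY⟩))).ne (h ▸ rfl)
  have hsub : ∀ a b : V, a - b = a + -b := fun a b => sub_eq_add_neg a b
  -- X-convergence to f
  have hXf : ∀ k, NX (u k - f) ≤ θ ^ k * NX (g - f) := by
    intro k; induction k with
    | zero => rw [pow_zero, one_mul, hu0]
    | succ k ih =>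
      have h1 : u (k + 1) - f = T (u k) - T f := by
        rw [hustep]; conv_lhs => rw [hfg]
        abel
      calc NX (u (k + 1) - f) = NX (T (u k) - T f) := by rw [h1]
        _ ≤ θ * NX (u k - f) := hTX _ _ (huX k) hf
        _ ≤ θ * (θ ^ k * NX (g - f)) := by gcongr
        _ = θ ^ (k + 1) * NX (g - f) := by ring
  have hgfX : NX (g - f) ≠ ⊤ := by
    intro h
    have := lt_of_le_of_lt (hsub g f ▸ hNXadd g (-f))
      (lt_top_iff_ne_top.2 (ENNReal.add_ne_top.2 ⟨hgX, (hNXneg f).symm ▸ hf⟩))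
    exact this.ne (h ▸ rfl)
  have hpow : Tendsto (fun k : ℕ => θ ^ k) atTop (nhds 0) :=
    ENNReal.tendsto_pow_atTop_nhds_zero_of_lt_one hθ
  have hXlim : Tendsto (fun k => NX (u k - f)) atTop (nhds 0) := by
    have h2 : Tendsto (fun k : ℕ => θ ^ k * NX (g - f)) atTop (nhds 0) := by
      simpa using ENNReal.Tendsto.mul_const hpow (Or.inr hgfX)
    exact tendsto_of_tendsto_of_tendsto_of_le_of_le tendsto_const_nhds h2
      (fun k => zero_le) hXf
  have hVf : Tendsto u atTop (nhds f) := convX u f hXlim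
  -- Y-Cauchy
  set C : ENNReal := NY (T g) with hC
  have hCne : C ≠ ⊤ := hTmapY g hgY
  have hstepY : ∀ k, NY (u (k + 1) - u k) ≤ θ ^ k * C := by
    intro k; induction k with
    | zero =>
      have e : u (0 + 1) - u 0 = T g := by
        show T g + g - g = T g; abel
      rw [e, pow_zero, one_mul]
    | succ k ih =>
      have h1 : u (k + 2) - u (k + 1) = T (u (k + 1)) - T (u k) := by
        rw [hustep (k+1), hustep k]; abel
      calc NY (u (k + 2) - u (k + 1)) = NY (T (u (k+1)) - T (u k)) := by rw [h1]
        _ ≤ θ * NY (u (k + 1) - u k) := hTY (u (k+1)) (u k) (huY (k+1)) (huY k)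
        _ ≤ θ * (θ ^ k * C) := by gcongr
        _ = θ ^ (k + 1) * C := by ring
  have hseg : ∀ m k, NY (u (k + m) - u k) ≤ θ ^ k * (1 - θ)⁻¹ * C := by
    have key : ∀ m k, NY (u (k + m) - u k) ≤ (∑ i ∈ Finset.range m, θ ^ (k + i)) * C := by
      intro m
      induction m with
      | zero => intro k; simpa using hNY0.le
      | succ m ih =>
        intro k
        have h1 : u (k + (m + 1)) - u k = (u (k + m + 1) - u (k + m)) + (u (k + m) - u k) := by
          have : k + (m + 1) = k + m + 1 := by ring
          rw [this]; abel
        calc NY (u (k + (m + 1)) - u k) ≤ NY (u (k + m + 1) - u (k + m)) + NY (u (k + m) - u k) := by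
              rw [h1]; exact hNYadd _ _
          _ ≤ θ ^ (k + m) * C + (∑ i ∈ Finset.range m, θ ^ (k + i)) * C := by
              gcongr
              · exact hstepY _
              · exact ih k
          _ = (∑ i ∈ Finset.range (m + 1), θ ^ (k + i)) * C := by
              rw [Finset.sum_range_succ, add_mul, add_comm]
    intro m k
    refine (key m k).trans ?_
    gcongr
    calc (∑ i ∈ Finset.range m, θ ^ (k + i)) = θ ^ k * ∑ i ∈ Finset.range m, θ ^ i := by
          rw [Finset.mul_sum]; exact Finset.sum_congr rfl fun i _ => pow_add θ k i
      _ ≤ θ ^ k * ∑' i, θ ^ i := by gcongr; exact ENNReal.sum_le_tsum _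
      _ = θ ^ k * (1 - θ)⁻¹ := by rw [ENNReal.tsum_geometric]
  have hEtend : Tendsto (fun k : ℕ => θ ^ k * ((1 - θ)⁻¹ * C)) atTop (nhds 0) := by
    have hfin : (1 - θ)⁻¹ * C ≠ ⊤ := by
      apply ENNReal.mul_ne_top _ hCne
      exact ENNReal.inv_ne_top.2 (tsub_pos_of_lt hθ).ne'
    simpa using ENNReal.Tendsto.mul_const hpow (Or.inr hfin)
  have hcauchyY : ∀ ε : ENNReal, 0 < ε → ∃ N, ∀ j ≥ N, ∀ k ≥ N, NY (u j - u k) < ε := by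
    intro ε hε
    obtain ⟨N, hN⟩ := eventually_atTop.1 (hEtend.eventually (gt_mem_nhds hε))
    refine ⟨N, fun j hj k hk => ?_⟩
    have key : ∀ a b : ℕ, N ≤ a → a ≤ b → NY (u b - u a) < ε := by
      intro a b ha hab
      obtain ⟨m, rfl⟩ := Nat.le.dest hab
      calc NY (u (a + m) - u a) ≤ θ ^ a * (1 - θ)⁻¹ * C := hseg m a
        _ = θ ^ a * ((1 - θ)⁻¹ * C) := by rw [mul_assoc]
        _ < ε := hN a ha
    rcases le_total k j with h | h
    · exact key k j hk h
    · have e : u j - u k = -(u k - u j) := by abel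
      rw [e, hNYneg]
      exact key j k hj h
  obtain ⟨w, hwY, hwlim⟩ := complY u huY hcauchyY
  have hVw : Tendsto u atTop (nhds w) := convY u w hwlim
  have : f = w := tendsto_nhds_unique hVf hVw
  rw [this]; exact hwY
end

section
/- Asymptotics of the half-space Green's function for fixed t: Let n ≥ 3, 0 < α < 2, B = (∫₀^∞ db/(b^{α/2}(1+b)))^{-1}, and for λ > 0 set F(λ) = 1 - B·(1+λ)^{-(n-2)/2} ∫₀^{1/λ} (1 - λb)^{(n-2)/2}/(b^{α/2}(1+b)) db. Then there exist constants 0 < c ≤ C and λ₀ > 0 such that c·λ^{α/2} ≤ F(λ) ≤ C·λ^{α/2} for all 0 < λ < λ₀. -/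
open MeasureTheory Set intervalIntegral

namespace Stmt14Aux

lemma g_contOn (α : ℝ) :
    ContinuousOn (fun b : ℝ => b ^ (-(α / 2)) * (1 + b)⁻¹) (Ioi 0) := by
  apply ContinuousOn.mul
  · exact continuousOn_id.rpow_const fun x hx => Or.inl (ne_of_gt hx)
  · refine (continuousOn_const.add continuousOn_id).inv₀ fun x hx => ?_
    have : (0:ℝ) < x := hx
    exact (by positivity : (1:ℝ) + x ≠ 0)

lemma g_aesm {α : ℝ} {s : Set ℝ} (hs : MeasurableSet s) (hsub : s ⊆ Ioi 0) :
    AEStronglyMeasurable (fun b : ℝ => b ^ (-(α / 2)) * (1 + b)⁻¹)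
      (volume.restrict s) :=
  ((g_contOn α).mono hsub).aestronglyMeasurable hs

lemma g_nonneg {α b : ℝ} (hb : 0 < b) : 0 ≤ b ^ (-(α / 2)) * (1 + b)⁻¹ := by
  positivity

lemma g_int {α : ℝ} (h0 : 0 < α) (h2 : α < 2) :
    IntegrableOn (fun b : ℝ => b ^ (-(α / 2)) * (1 + b)⁻¹) (Ioi 0) := by
  have hunion : Ioc (0:ℝ) 1 ∪ Ioi 1 = Ioi 0 := Ioc_union_Ioi_eq_Ioi zero_le_one
  rw [← hunion]
  apply IntegrableOn.union
  · -- near 0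
    have hrp : IntervalIntegrable (fun x : ℝ => x ^ (-(α / 2))) volume 0 1 :=
      intervalIntegral.intervalIntegrable_rpow' (by linarith)
    have hint : IntegrableOn (fun x : ℝ => x ^ (-(α / 2))) (Ioc 0 1) :=
      (intervalIntegrable_iff_integrableOn_Ioc_of_le zero_le_one).mp hrp
    refine Integrable.mono' hint (g_aesm measurableSet_Ioc Ioc_subset_Ioi_self) ?_
    filter_upwards [ae_restrict_mem measurableSet_Ioc] with x hx
    have hx0 : (0:ℝ) < x := hx.1
    have h1 : (1 + x)⁻¹ ≤ 1 := by
      rw [inv_le_one_iff₀]; right; linarith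
    have h2' : 0 ≤ x ^ (-(α / 2)) := (Real.rpow_pos_of_pos hx0 _).le
    rw [Real.norm_eq_abs, abs_of_nonneg (g_nonneg hx0)]
    calc x ^ (-(α / 2)) * (1 + x)⁻¹ ≤ x ^ (-(α / 2)) * 1 := by
          apply mul_le_mul_of_nonneg_left h1 h2'
      _ = x ^ (-(α / 2)) := mul_one _
  · -- tail
    have hint : IntegrableOn (fun x : ℝ => x ^ (-(α / 2) - 1)) (Ioi 1) :=
      integrableOn_Ioi_rpow_of_lt (by linarith) one_pos
    refine Integrable.mono' hint (g_aesm measurableSet_Ioi (Ioi_subset_Ioi zero_le_one)) ?_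
    filter_upwards [ae_restrict_mem measurableSet_Ioi] with x hx
    have hx1 : (1:ℝ) < x := hx
    have hx0 : (0:ℝ) < x := by linarith
    rw [Real.norm_eq_abs, abs_of_nonneg (g_nonneg hx0)]
    have h1 : (1 + x)⁻¹ ≤ x⁻¹ := by
      apply inv_anti₀ hx0; linarith
    calc x ^ (-(α / 2)) * (1 + x)⁻¹ ≤ x ^ (-(α / 2)) * x⁻¹ :=
          mul_le_mul_of_nonneg_left h1 (Real.rpow_pos_of_pos hx0 _).le
      _ = x ^ (-(α / 2) - 1) := by
          rw [← Real.rpow_neg_one x, ← Real.rpow_add hx0]; ring_nf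

lemma tail_lb {α : ℝ} (h0 : 0 < α) (h2 : α < 2) {r : ℝ} (hr : 1 ≤ r) :
    (1 / α) * r ^ (-(α / 2)) ≤ ∫ b in Ioi r, b ^ (-(α / 2)) * (1 + b)⁻¹ := by
  have hr0 : (0:ℝ) < r := lt_of_lt_of_le one_pos hr
  have hint : IntegrableOn (fun x : ℝ => x ^ (-(α / 2) - 1)) (Ioi r) :=
    integrableOn_Ioi_rpow_of_lt (by linarith) hr0
  have hgi : IntegrableOn (fun b : ℝ => b ^ (-(α / 2)) * (1 + b)⁻¹) (Ioi r) :=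
    (g_int h0 h2).mono_set (Ioi_subset_Ioi hr0.le)
  have key : ∫ b in Ioi r, (1/2) * b ^ (-(α / 2) - 1)
      ≤ ∫ b in Ioi r, b ^ (-(α / 2)) * (1 + b)⁻¹ := by
    apply setIntegral_mono_on (hint.const_mul _) hgi measurableSet_Ioi
    intro x hx
    have hx1 : r < x := hx
    have hx0 : (0:ℝ) < x := lt_trans hr0 hx1
    have hx1' : (1:ℝ) ≤ x := le_trans hr hx1.le
    have h1 : (2 * x)⁻¹ ≤ (1 + x)⁻¹ := by
      apply inv_anti₀ (by positivity); linarith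
    calc (1/2) * x ^ (-(α / 2) - 1) = x ^ (-(α / 2)) * (2 * x)⁻¹ := by
          rw [show -(α/2) - 1 = -(α/2) + (-1) by ring, Real.rpow_add hx0,
            Real.rpow_neg_one, mul_inv]
          ring
      _ ≤ x ^ (-(α / 2)) * (1 + x)⁻¹ :=
          mul_le_mul_of_nonneg_left h1 (Real.rpow_pos_of_pos hx0 _).le
  have hval : ∫ b in Ioi r, b ^ (-(α / 2) - 1) = -r ^ (-(α/2)) / (-(α/2)) := by
    rw [integral_Ioi_rpow_of_lt (by linarith) hr0]; ring_nf
  rw [MeasureTheory.integral_const_mul, hval] at key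
  calc (1/α) * r ^ (-(α/2)) = (1/2) * (-r ^ (-(α/2)) / (-(α/2))) := by
        field_simp
    _ ≤ _ := key

lemma tail_ub {α : ℝ} (h0 : 0 < α) (h2 : α < 2) {r : ℝ} (hr : 1 ≤ r) :
    (∫ b in Ioi r, b ^ (-(α / 2)) * (1 + b)⁻¹) ≤ (2 / α) * r ^ (-(α / 2)) := by
  have hr0 : (0:ℝ) < r := lt_of_lt_of_le one_pos hr
  have hint : IntegrableOn (fun x : ℝ => x ^ (-(α / 2) - 1)) (Ioi r) :=
    integrableOn_Ioi_rpow_of_lt (by linarith) hr0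
  have hgi : IntegrableOn (fun b : ℝ => b ^ (-(α / 2)) * (1 + b)⁻¹) (Ioi r) :=
    (g_int h0 h2).mono_set (Ioi_subset_Ioi hr0.le)
  have key : (∫ b in Ioi r, b ^ (-(α / 2)) * (1 + b)⁻¹)
      ≤ ∫ b in Ioi r, b ^ (-(α / 2) - 1) := by
    apply setIntegral_mono_on hgi hint measurableSet_Ioi
    intro x hx
    have hx0 : (0:ℝ) < x := lt_of_le_of_lt hr0.le hx
    have h1 : (1 + x)⁻¹ ≤ x⁻¹ := by
      apply inv_anti₀ hx0; linarith
    calc x ^ (-(α / 2)) * (1 + x)⁻¹ ≤ x ^ (-(α / 2)) * x⁻¹ :=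
          mul_le_mul_of_nonneg_left h1 (Real.rpow_pos_of_pos hx0 _).le
      _ = x ^ (-(α / 2) - 1) := by
          rw [← Real.rpow_neg_one x, ← Real.rpow_add hx0]; ring_nf
  rw [integral_Ioi_rpow_of_lt (by linarith) hr0] at key
  calc (∫ b in Ioi r, b ^ (-(α / 2)) * (1 + b)⁻¹)
      ≤ -r ^ (-(α/2) - 1 + 1) / (-(α/2) - 1 + 1) := key
    _ = (2/α) * r ^ (-(α/2)) := by rw [show -(α/2) - 1 + 1 = -(α/2) by ring]; field_simp

lemma one_sub_rpow_le {u m : ℝ} (hu0 : 0 ≤ u) (hu1 : u ≤ 1) (hm : 0 < m) :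
    1 - u ^ m ≤ max m 1 * (1 - u) := by
  rcases le_or_gt m 1 with h | h
  · rw [max_eq_right h]
    rcases eq_or_lt_of_le hu0 with h0 | h0
    · rw [← h0, Real.zero_rpow hm.ne']; simp
    · have : u ^ (1:ℝ) ≤ u ^ m := Real.rpow_le_rpow_of_exponent_ge h0 hu1 h
      rw [Real.rpow_one] at this
      linarith
  · rw [max_eq_left h.le]
    have := one_add_mul_self_le_rpow_one_add (s := u - 1) (by linarith) h.le
    rw [show 1 + (u - 1) = u by ring] at this
    nlinarith

end Stmt14Aux

section Main
open Stmt14Aux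

/-- Asymptotics of the half-space Green's function factor:
F(λ) = 1 - B (1+λ)^{-(n-2)/2} ∫₀^{1/λ}(1-λb)^{(n-2)/2}/(b^{α/2}(1+b)) db with
B = (∫₀^∞ db/(b^{α/2}(1+b)))⁻¹ satisfies F(λ) ≍ λ^{α/2} as λ → 0⁺. -/
theorem stmt14 (n : ℕ) (hn : 3 ≤ n) (α B : ℝ) (hα : α ∈ Set.Ioo (0 : ℝ) 2)
    (hB : B = (∫ b in Set.Ioi (0 : ℝ), b ^ (-(α / 2)) * (1 + b)⁻¹)⁻¹)
    (F : ℝ → ℝ)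
    (hF : ∀ lam : ℝ, 0 < lam →
      F lam = 1 - B * (1 + lam) ^ (-(((n : ℝ) - 2) / 2)) *
        ∫ b in (0 : ℝ)..(1 / lam),
          (1 - lam * b) ^ (((n : ℝ) - 2) / 2) / (b ^ (α / 2) * (1 + b))) :
    ∃ c C lam₀ : ℝ, 0 < c ∧ c ≤ C ∧ 0 < lam₀ ∧
      ∀ lam : ℝ, 0 < lam → lam < lam₀ →
        c * lam ^ (α / 2) ≤ F lam ∧ F lam ≤ C * lam ^ (α / 2) := by
  obtain ⟨hα0, hα2⟩ := hα
  set m : ℝ := ((n : ℝ) - 2) / 2 with hm_def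
  have hn3 : (3 : ℝ) ≤ (n : ℝ) := by exact_mod_cast hn
  have hm0 : 0 < m := by rw [hm_def]; linarith
  set g : ℝ → ℝ := fun b => b ^ (-(α / 2)) * (1 + b)⁻¹ with hg_def
  set I : ℝ := ∫ b in Set.Ioi (0 : ℝ), g b with hI_def
  have hgint : IntegrableOn g (Ioi 0) := g_int hα0 hα2
  -- positivity of I
  have hT1 : (1 / α) * (1:ℝ) ^ (-(α / 2)) ≤ ∫ b in Ioi (1:ℝ), g b := tail_lb hα0 hα2 le_rfl
  rw [Real.one_rpow, mul_one] at hT1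
  have hIle : (∫ b in Ioi (1:ℝ), g b) ≤ I := by
    apply setIntegral_mono_set hgint
    · filter_upwards [ae_restrict_mem measurableSet_Ioi] with x hx
      exact g_nonneg hx
    · exact HasSubset.Subset.eventuallyLE (Ioi_subset_Ioi zero_le_one)
  have hI : 0 < I := lt_of_lt_of_le (by positivity) (le_trans hT1 hIle)
  set M : ℝ := max m 1 with hM_def
  have hM1 : (1:ℝ) ≤ M := le_max_right _ _
  have h2α : 0 < 1 - α / 2 := by linarith
  refine ⟨I⁻¹ * (1 / α), I⁻¹ * (M / (1 - α / 2) + 2 / α), 1, by positivity, ?_, one_pos, ?_⟩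
  · apply mul_le_mul_of_nonneg_left _ (by positivity)
    have hMd : (0:ℝ) ≤ M / (1 - α / 2) := by positivity
    have h12 : (1:ℝ) / α ≤ 2 / α := by gcongr <;> norm_num
    linarith
  intro lam hl0 hl1
  set r : ℝ := 1 / lam with hr_def
  have hr1 : (1:ℝ) ≤ r := by
    rw [hr_def]; rw [le_div_iff₀ hl0]; linarith
  have hr0 : (0:ℝ) < r := lt_of_lt_of_le one_pos hr1
  have hlam1 : (0:ℝ) < 1 + lam := by linarith
  set c : ℝ := (1 + lam) ^ (-m) with hc_def
  have hc_pos : 0 < c := Real.rpow_pos_of_pos hlam1 _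
  set k : ℝ → ℝ := fun b => (1 - lam * b) ^ m * g b with hk_def
  -- rewrite the interval integral as a set integral of k
  have hJ : (∫ b in (0:ℝ)..r, (1 - lam * b) ^ m / (b ^ (α / 2) * (1 + b)))
      = ∫ b in Ioc (0:ℝ) r, k b := by
    rw [intervalIntegral.integral_of_le hr0.le]
    apply setIntegral_congr_fun measurableSet_Ioc
    intro b hb
    have hb0 : (0:ℝ) < b := hb.1
    have hb1 : (0:ℝ) < 1 + b := by linarith
    rw [hk_def, hg_def]
    simp only []
    rw [Real.rpow_neg hb0.le, div_eq_mul_inv, mul_inv]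
  -- facts on Ioc 0 r
  have hmem : ∀ b ∈ Ioc (0:ℝ) r, 0 ≤ 1 - lam * b ∧ 1 - lam * b ≤ 1 := by
    intro b hb
    constructor
    · have : b ≤ r := hb.2
      rw [hr_def] at this
      have := (le_div_iff₀ hl0).mp this
      linarith [mul_comm b lam]
    · nlinarith [hb.1, hl0]
  have hg_Ioc : IntegrableOn g (Ioc 0 r) := hgint.mono_set Ioc_subset_Ioi_self
  have hk_meas : AEStronglyMeasurable k (volume.restrict (Ioc (0:ℝ) r)) := by
    apply ContinuousOn.aestronglyMeasurable _ measurableSet_Ioc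
    apply ContinuousOn.mul
    · apply Continuous.continuousOn
      apply Continuous.rpow_const (continuous_const.sub (continuous_const.mul continuous_id))
      intro x; exact Or.inr hm0.le
    · exact (g_contOn α).mono Ioc_subset_Ioi_self
  have hk_int : IntegrableOn k (Ioc 0 r) := by
    refine Integrable.mono' hg_Ioc hk_meas ?_
    filter_upwards [ae_restrict_mem measurableSet_Ioc] with b hb
    obtain ⟨h1, h2⟩ := hmem b hb
    have hgb : 0 ≤ g b := g_nonneg hb.1
    have hle : (1 - lam * b) ^ m ≤ 1 := Real.rpow_le_one h1 h2 hm0.le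
    have hge : 0 ≤ (1 - lam * b) ^ m := Real.rpow_nonneg h1 _
    rw [Real.norm_eq_abs, hk_def]
    simp only []
    rw [abs_of_nonneg (mul_nonneg hge hgb)]
    calc (1 - lam * b) ^ m * g b ≤ 1 * g b := mul_le_mul_of_nonneg_right hle hgb
      _ = g b := one_mul _
  -- split I
  have hTint : IntegrableOn g (Ioi r) := hgint.mono_set (Ioi_subset_Ioi hr0.le)
  set T : ℝ := ∫ b in Ioi r, g b with hT_def
  have hsplit : I = (∫ b in Ioc (0:ℝ) r, g b) + T := by
    rw [hI_def, hT_def, ← setIntegral_union (Ioc_disjoint_Ioi le_rfl) measurableSet_Ioi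
      hg_Ioc hTint, Ioc_union_Ioi_eq_Ioi hr0.le]
  -- F lam = I⁻¹ * D
  set Jset : ℝ := ∫ b in Ioc (0:ℝ) r, k b with hJset_def
  have hFlam : F lam = I⁻¹ * (I - c * Jset) := by
    rw [hF lam hl0, hB, hJ, hc_def, mul_sub,
      inv_mul_cancel₀ (ne_of_gt hI)]
    ring
  -- rewrite D
  have hck_int : IntegrableOn (fun b => c * k b) (Ioc 0 r) := hk_int.const_mul c
  have hD : I - c * Jset = (∫ b in Ioc (0:ℝ) r, (g b - c * k b)) + T := by
    rw [integral_sub hg_Ioc hck_int, MeasureTheory.integral_const_mul, hsplit]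
    ring
  -- pointwise facts for the difference
  have hpt : ∀ b ∈ Ioc (0:ℝ) r,
      (0 ≤ g b - c * k b) ∧ (g b - c * k b ≤ M * lam * b ^ (-(α / 2))) := by
    intro b hb
    obtain ⟨h1, h2⟩ := hmem b hb
    have hb0 : (0:ℝ) < b := hb.1
    have hb1 : (0:ℝ) < 1 + b := by linarith
    have hgb : 0 ≤ g b := g_nonneg hb0
    set u : ℝ := (1 - lam * b) / (1 + lam) with hu_def
    have hu0 : 0 ≤ u := div_nonneg h1 hlam1.le
    have hu1 : u ≤ 1 := by
      rw [hu_def, div_le_one hlam1]; linarith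
    have hcu : c * (1 - lam * b) ^ m = u ^ m := by
      rw [hu_def, Real.div_rpow h1 hlam1.le, hc_def, Real.rpow_neg hlam1.le]
      ring
    have hkey : g b - c * k b = (1 - u ^ m) * g b := by
      rw [hk_def]; simp only []
      rw [← hcu]; ring
    have hbound : 1 - u ^ m ≤ M * (1 - u) := one_sub_rpow_le hu0 hu1 hm0
    have hum1 : u ^ m ≤ 1 := Real.rpow_le_one hu0 hu1 hm0.le
    constructor
    · rw [hkey]
      exact mul_nonneg (by linarith) hgb
    · rw [hkey]
      calc (1 - u ^ m) * g b ≤ (M * (1 - u)) * g b :=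
            mul_le_mul_of_nonneg_right hbound hgb
        _ = M * lam * b ^ (-(α / 2)) * (1 + lam)⁻¹ := by
            rw [hu_def, hg_def]
            simp only []
            field_simp
            ring
        _ ≤ M * lam * b ^ (-(α / 2)) * 1 := by
            apply mul_le_mul_of_nonneg_left _ (by positivity)
            rw [inv_le_one_iff₀]; right; linarith
        _ = M * lam * b ^ (-(α / 2)) := mul_one _
  -- Q bounds
  set Q : ℝ := ∫ b in Ioc (0:ℝ) r, (g b - c * k b) with hQ_def
  have hQ0 : 0 ≤ Q :=
    setIntegral_nonneg measurableSet_Ioc fun b hb => (hpt b hb).1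
  have hrpow_int : IntegrableOn (fun b : ℝ => b ^ (-(α / 2))) (Ioc 0 r) :=
    (intervalIntegrable_iff_integrableOn_Ioc_of_le hr0.le).mp
      (intervalIntegral.intervalIntegrable_rpow' (by linarith))
  have hQub : Q ≤ M * lam ^ (α / 2) / (1 - α / 2) := by
    have step : Q ≤ ∫ b in Ioc (0:ℝ) r, M * lam * b ^ (-(α / 2)) := by
      apply setIntegral_mono_on (hg_Ioc.sub hck_int) (hrpow_int.const_mul _)
        measurableSet_Ioc
      intro b hb
      exact (hpt b hb).2
    have hval : (∫ b in Ioc (0:ℝ) r, M * lam * b ^ (-(α / 2)))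
        = M * lam * (r ^ (1 - α / 2) / (1 - α / 2)) := by
      rw [MeasureTheory.integral_const_mul, ← intervalIntegral.integral_of_le hr0.le,
        integral_rpow (Or.inl (by linarith))]
      rw [Real.zero_rpow (by linarith : -(α/2) + 1 ≠ 0)]
      ring_nf
    have hrval : r ^ (1 - α / 2) = lam ^ (α / 2 - 1) := by
      rw [hr_def, one_div, Real.inv_rpow hl0.le, ← Real.rpow_neg hl0.le,
        show -(1 - α / 2) = α / 2 - 1 by ring]
    have hlamm : lam * lam ^ (α / 2 - 1) = lam ^ (α / 2) := by
      nth_rewrite 1 [← Real.rpow_one lam]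
      rw [← Real.rpow_add hl0, show (1:ℝ) + (α / 2 - 1) = α / 2 by ring]
    calc Q ≤ M * lam * (r ^ (1 - α / 2) / (1 - α / 2)) := by rw [← hval]; exact step
      _ = M * lam ^ (α / 2) / (1 - α / 2) := by
          rw [hrval, mul_assoc, ← mul_div_assoc, hlamm, mul_div_assoc]
  -- tail bounds
  have hrneg : r ^ (-(α / 2)) = lam ^ (α / 2) := by
    rw [hr_def, one_div, Real.inv_rpow hl0.le, ← Real.rpow_neg hl0.le, neg_neg]
  have hTlb : (1 / α) * lam ^ (α / 2) ≤ T := by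
    have := tail_lb hα0 hα2 hr1
    rwa [hrneg] at this
  have hTub : T ≤ (2 / α) * lam ^ (α / 2) := by
    have := tail_ub hα0 hα2 hr1
    rwa [hrneg] at this
  -- conclude
  have hFD : F lam = I⁻¹ * (Q + T) := by rw [hFlam, hD, hQ_def]
  constructor
  · rw [hFD, mul_assoc]
    apply mul_le_mul_of_nonneg_left _ (by positivity)
    calc 1 / α * lam ^ (α / 2) ≤ T := hTlb
      _ ≤ Q + T := by linarith
  · rw [hFD, mul_assoc]
    apply mul_le_mul_of_nonneg_left _ (by positivity)
    calc Q + T ≤ M * lam ^ (α / 2) / (1 - α / 2) + 2 / α * lam ^ (α / 2) := by linarith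
      _ = (M / (1 - α / 2) + 2 / α) * lam ^ (α / 2) := by ring

end Main
end

section
/- Iteration lower bound in the nonexistence proof: Let 0 < α < 2 and 1 < p ≤ (n+α)/(n-α) with n ≥ 3, and let m be an integer with m ≥ ⌊(3 - α²)/α⌋ + 1. Then τ(p) := [p^m(α/2 - 1) + α(p^m - 1)/(p - 1)]·p + α/2 ≥ 0. -/
/-- Iteration lower bound: for 0 < α < 2, 1 < p ≤ (n+α)/(n-α), n ≥ 3, and
m ≥ ⌊(3-α²)/α⌋ + 1, one has τ(p) = [pᵐ(α/2-1) + α(pᵐ-1)/(p-1)]·p + α/2 ≥ 0. -/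
theorem stmt15 (n : ℕ) (hn : 3 ≤ n) (α p : ℝ) (hα : α ∈ Set.Ioo (0 : ℝ) 2)
    (hp1 : 1 < p) (hp2 : p ≤ ((n : ℝ) + α) / ((n : ℝ) - α))
    (m : ℕ) (hm : ⌊(3 - α ^ 2) / α⌋ + 1 ≤ (m : ℤ)) :
    0 ≤ (p ^ m * (α / 2 - 1) + α * (p ^ m - 1) / (p - 1)) * p + α / 2 := by
  obtain ⟨hα0, hα2⟩ := hα
  have hp0 : (0:ℝ) < p - 1 := by linarith
  have hpne : p - 1 ≠ 0 := ne_of_gt hp0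
  have hn3 : (3:ℝ) ≤ (n:ℝ) := by exact_mod_cast hn
  have hnα : (0:ℝ) < (n:ℝ) - α := by linarith
  -- key consequence of p ≤ (n+α)/(n-α) and n ≥ 3
  have hp2' : p * ((n:ℝ) - α) ≤ (n:ℝ) + α := (le_div_iff₀ hnα).mp hp2
  have hK : (p - 1) * (3 - α) ≤ 2 * α := by
    nlinarith [mul_nonneg (sub_nonneg.mpr hp1.le) (sub_nonneg.mpr hn3)]
  -- consequence of the floor hypothesis
  have hmR : (3 - α ^ 2) / α < (m:ℝ) := by
    have h1 : (3 - α ^ 2) / α < (⌊(3 - α ^ 2) / α⌋ : ℝ) + 1 := Int.lt_floor_add_one _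
    have h2 : ((⌊(3 - α ^ 2) / α⌋ : ℝ) + 1) ≤ (m:ℝ) := by exact_mod_cast hm
    linarith
  have hmα : 3 - α ^ 2 < (m:ℝ) * α := (div_lt_iff₀ hα0).mp hmR
  have hmα' : 3 - α ≤ ((m:ℝ) + 1) * α := by nlinarith
  -- geometric sum
  set S : ℝ := ∑ k ∈ Finset.range (m + 1), p ^ k with hSdef
  have hgeom : S * (p - 1) = p ^ (m + 1) - 1 := geom_sum_mul p (m + 1)
  have hS : ((m:ℝ) + 1) ≤ S := by
    have : ∀ k ∈ Finset.range (m + 1), (1:ℝ) ≤ p ^ k := fun k _ => one_le_pow₀ hp1.le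
    calc ((m:ℝ) + 1) = ∑ _k ∈ Finset.range (m + 1), (1:ℝ) := by simp
      _ ≤ S := Finset.sum_le_sum this
  -- the coefficient c := α/2*(p+1) - (p-1)
  have hc : α ≤ (α / 2 * (p + 1) - (p - 1)) * (3 - α) := by
    nlinarith [mul_nonneg (by linarith : (0:ℝ) ≤ 1 - α / 2)
      (by linarith : (0:ℝ) ≤ 2 * α - (p - 1) * (3 - α))]
  have hcpos : 0 < α / 2 * (p + 1) - (p - 1) := by nlinarith
  -- main inequality: S * c ≥ 1
  have hSc : 1 ≤ S * (α / 2 * (p + 1) - (p - 1)) := by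
    nlinarith [mul_nonneg (by linarith : (0:ℝ) ≤ S - ((m:ℝ) + 1)) hcpos.le,
      mul_nonneg (by positivity : (0:ℝ) ≤ (m:ℝ) + 1) (by linarith : (0:ℝ) ≤ (α / 2 * (p + 1) - (p - 1)) * (3 - α) - α)]
  -- numerator is nonnegative
  have key : 0 ≤ (p ^ m * (α / 2 - 1) * (p - 1) + α * (p ^ m - 1)) * p + α / 2 * (p - 1) := by
    have hid : (p ^ m * (α / 2 - 1) * (p - 1) + α * (p ^ m - 1)) * p + α / 2 * (p - 1)
        = (p - 1) * (S * (α / 2 * (p + 1) - (p - 1)) - 1) := by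
      linear_combination (-(α / 2 * (p + 1) - (p - 1))) * hgeom
    rw [hid]
    exact mul_nonneg hp0.le (by linarith)
  have hrw : (p ^ m * (α / 2 - 1) + α * (p ^ m - 1) / (p - 1)) * p + α / 2
      = ((p ^ m * (α / 2 - 1) * (p - 1) + α * (p ^ m - 1)) * p + α / 2 * (p - 1)) / (p - 1) := by
    field_simp
  rw [hrw]
  exact div_nonneg key hp0.le
end
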